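/- arXiv:0911.0954 — 2 statements merged into one kernel-verified Lean document; each statement's English description precedes it below -/
import Mathlib

section
/- Let S ⊆ ∂𝔻 be closed and let Σ assign to each s ∈ S and k ∈ {−1,1} a unital additive semigroup Σ(s,k) ⊆ ℝ. A function f ∈ SAP(S) belongs to SAP_Σ(S) if and only if for every s ∈ S and every ε > 0 the approximating functions f_k (k ∈ {−1,1}) in the definition of semi-almost periodicity at s can be chosen so that each function x ↦ f_k(s e^{ikδe^x}), −∞ < x < 0, is the restriction of a function in AP_{Σ(s,k)}(ℝ). -/
open Complex Filter Topology Set Metric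
open scoped ENNReal
open scoped BoundedContinuousFunction

set_option maxHeartbeats 1000000
set_option synthInstance.maxHeartbeats 200000

noncomputable section

namespace SAP

variable {B : Type*} [NormedAddCommGroup B] [NormedSpace ℂ B]

def translateR (f : ℝ →ᵇ B) (τ : ℝ) : ℝ →ᵇ B :=
  f.compContinuous ⟨fun x => x + τ, by continuity⟩

def IsAP (f : ℝ →ᵇ B) : Prop := IsCompact (closure (Set.range (translateR f)))

def meanValueR (g : ℝ → B) : B :=
  haveI : Nonempty B := ⟨0⟩
  limUnder atTop (fun T : ℝ => (2 * T)⁻¹ • ∫ x in (-T)..T, g x)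

def bohrCoeffR (g : ℝ → B) (lam : ℝ) : B :=
  meanValueR (fun x => Complex.exp (-(Complex.I * lam * x)) • g x)

def apSpec (g : ℝ → B) : Set ℝ := {lam | bohrCoeffR g lam ≠ 0}

def IsUnitalSemigroup (Γ : Set ℝ) : Prop :=
  (0 : ℝ) ∈ Γ ∧ ∀ a ∈ Γ, ∀ b ∈ Γ, a + b ∈ Γ

def circleSet : Set ℂ := {z | ‖z‖ = 1}

def arcPt (s : circleSet) (k t : ℝ) : circleSet :=
  ⟨(s : ℂ) * Complex.exp (Complex.I * (k * t)), by
    have hs : ‖(s : ℂ)‖ = 1 := s.2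
    show ‖_‖ = 1
    rw [norm_mul, hs, one_mul, Complex.norm_exp]
    simp [Complex.mul_re]⟩

def IsSAP (f : circleSet → B) : Prop :=
  ∀ s : circleSet, ∀ ε : ℝ, 0 < ε → ∃ δ : ℝ, δ ∈ Set.Ioo (0 : ℝ) Real.pi ∧
    ∃ g₁ g₂ : ℝ →ᵇ B, IsAP g₁ ∧ IsAP g₂ ∧
      (∀ x : ℝ, x < 0 → ‖f (arcPt s (-1) (δ * Real.exp x)) - g₁ x‖ < ε) ∧
      (∀ x : ℝ, x < 0 → ‖f (arcPt s 1 (δ * Real.exp x)) - g₂ x‖ < ε)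

/-- the Bohr-Fourier coefficient `a_λ^k(f,s)` of a semi-almost periodic function over a
point `s` of the circle (here `M_s^k` is computed along the sequences `aₙ = -2n`, `bₙ = -n`) -/
def circBohr (f : circleSet → B) (s : circleSet) (k lam : ℝ) : B :=
  haveI : Nonempty B := ⟨0⟩
  limUnder atTop (fun T : ℝ => T⁻¹ •
    ∫ t in (-2 * T)..(-T), Complex.exp (-(Complex.I * lam * t)) • f (arcPt s k (Real.exp t)))

/-- the spectrum `spec_s^k(f)` -/
def sapSpec (f : circleSet → B) (s : circleSet) (k : ℝ) : Set ℝ :=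
  {lam | circBohr f s k lam ≠ 0}

abbrev LinfT : Type := ↥(lp (fun _ : circleSet => ℂ) ∞)

end SAP


namespace APWork
open SAP BoundedContinuousFunction MeasureTheory intervalIntegral

@[simp] lemma translateR_apply (u : ℝ →ᵇ ℂ) (τ x : ℝ) : translateR u τ x = u (x + τ) := rfl

lemma translateR_comp (u : ℝ →ᵇ ℂ) (σ τ : ℝ) :
    translateR (translateR u σ) τ = translateR u (τ + σ) := by
  ext x; simp [add_assoc]

@[simp] lemma translateR_zero (u : ℝ →ᵇ ℂ) : translateR u 0 = u := by
  ext x; simp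

lemma dist_translateR_le (u v : ℝ →ᵇ ℂ) (τ : ℝ) :
    dist (translateR u τ) (translateR v τ) ≤ dist u v := by
  refine (BoundedContinuousFunction.dist_le (dist_nonneg : (0:ℝ) ≤ dist u v)).2 fun x => ?_
  exact BoundedContinuousFunction.dist_coe_le_dist (f := u) (g := v) (x + τ)

lemma dist_translateR (u v : ℝ →ᵇ ℂ) (τ : ℝ) :
    dist (translateR u τ) (translateR v τ) = dist u v := by
  refine le_antisymm (dist_translateR_le u v τ) ?_
  have h := dist_translateR_le (translateR u τ) (translateR v τ) (-τ)
  simpa [translateR_comp] using h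

lemma exists_almost_periods (u : ℝ →ᵇ ℂ) (hu : IsAP u) {ε : ℝ} (hε : 0 < ε) :
    ∃ L > 0, ∀ a : ℝ, ∃ τ, τ ∈ Set.Icc a (a + L) ∧ dist (translateR u τ) u ≤ ε := by
  have htb : TotallyBounded (Set.range (translateR u)) :=
    (hu.totallyBounded).subset subset_closure
  obtain ⟨t, hts, htf, hcov⟩ := (totallyBounded_iff_subset.1 htb)
    {p : (ℝ →ᵇ ℂ) × (ℝ →ᵇ ℂ) | dist p.1 p.2 < ε} (Metric.dist_mem_uniformity hε)
  have hchoice : ∀ y : ℝ →ᵇ ℂ, ∃ τy : ℝ, y ∈ t → translateR u τy = y := by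
    intro y
    by_cases hy : y ∈ t
    · obtain ⟨τy, hτy⟩ := hts hy
      exact ⟨τy, fun _ => hτy⟩
    · exact ⟨0, fun h => absurd h hy⟩
  choose τof hτof using hchoice
  have htne : t.Nonempty := by
    by_contra hne
    rw [Set.not_nonempty_iff_eq_empty] at hne
    have := hcov (Set.mem_range_self (0 : ℝ))
    simp [hne] at this
  set tF := htf.toFinset with htF
  have htFne : tF.Nonempty := by
    simpa [htF, Set.Finite.toFinset_nonempty] using htne
  set M := tF.sup' htFne (fun y => |τof y|) with hM
  obtain ⟨y0, hy0⟩ := htFne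
  have hM0 : 0 ≤ M := le_trans (abs_nonneg (τof y0)) (Finset.le_sup' (fun y => |τof y|) hy0)
  refine ⟨2 * M + 1, by positivity, fun a => ?_⟩
  obtain ⟨y, hy, hdy⟩ : ∃ y ∈ t, dist (translateR u (a + M)) y < ε := by
    have := hcov (Set.mem_range_self (a + M))
    simpa using this
  have hyt : y ∈ tF := by simpa [htF] using hy
  have hτyM : |τof y| ≤ M := Finset.le_sup' (fun y => |τof y|) hyt
  refine ⟨a + M - τof y, ?_, ?_⟩
  · constructor
    · have := (abs_le.1 hτyM).2; linarith
    · have := (abs_le.1 hτyM).1; linarith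
  · have hcomp : translateR (translateR u (a + M - τof y)) (τof y) = translateR u (a + M) := by
      rw [translateR_comp]; ring_nf
    have heq : dist (translateR u (a + M - τof y)) u = dist (translateR u (a + M)) y := by
      conv_rhs => rw [← hτof y hy, ← hcomp, dist_translateR]
    rw [heq]
    exact le_of_lt hdy

noncomputable def avg (u : ℝ →ᵇ ℂ) (a ℓ : ℝ) : ℂ := ℓ⁻¹ • ∫ x in a..(a+ℓ), (u x : ℂ)

lemma bcf_ii (u : ℝ →ᵇ ℂ) (a b : ℝ) : IntervalIntegrable (fun x => u x) volume a b :=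
  (u.continuous.intervalIntegrable a b)

lemma norm_avg_le (u : ℝ →ᵇ ℂ) {a ℓ : ℝ} (hℓ : 0 < ℓ) : ‖avg u a ℓ‖ ≤ ‖u‖ := by
  have h := intervalIntegral.norm_integral_le_of_norm_le_const
    (C := ‖u‖) (f := fun x => u x) (a := a) (b := a + ℓ)
    (fun x _ => u.norm_coe_le_norm x)
  rw [avg, norm_smul, Real.norm_eq_abs, abs_of_pos (inv_pos.2 hℓ)]
  calc ℓ⁻¹ * ‖∫ x in a..(a+ℓ), u x‖ ≤ ℓ⁻¹ * (‖u‖ * |a + ℓ - a|) := by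
        exact mul_le_mul_of_nonneg_left (by simpa using h) (le_of_lt (inv_pos.2 hℓ))
    _ = ‖u‖ := by rw [add_sub_cancel_left, abs_of_pos hℓ]; field_simp

lemma avg_add (u v : ℝ →ᵇ ℂ) (a ℓ : ℝ) : avg (u + v) a ℓ = avg u a ℓ + avg v a ℓ := by
  unfold avg
  rw [← smul_add, ← intervalIntegral.integral_add (bcf_ii u _ _) (bcf_ii v _ _)]
  rfl

lemma avg_smul (c : ℂ) (u : ℝ →ᵇ ℂ) (a ℓ : ℝ) : avg (c • u) a ℓ = c • avg u a ℓ := by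
  unfold avg
  rw [smul_comm]
  congr 1
  rw [← intervalIntegral.integral_smul]
  rfl

lemma avg_translate (u : ℝ →ᵇ ℂ) (c a ℓ : ℝ) :
    avg (translateR u c) a ℓ = avg u (a + c) ℓ := by
  unfold avg
  congr 1
  have := intervalIntegral.integral_comp_add_right (a := a) (b := a + ℓ)
    (fun x => (u x : ℂ)) c
  simp only [translateR_apply]
  rw [this]
  congr 1
  ring

lemma avg_shift_bound (u : ℝ →ᵇ ℂ) {ε L : ℝ}
    (hL : ∀ a : ℝ, ∃ τ, τ ∈ Set.Icc a (a + L) ∧ dist (translateR u τ) u ≤ ε)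
    (hL0 : 0 ≤ L) :
    ∀ a ℓ : ℝ, 0 < ℓ → ‖avg u a ℓ - avg u 0 ℓ‖ ≤ ε + 2 * L * ‖u‖ / ℓ := by
  intro a ℓ hℓ
  obtain ⟨τ, hτmem, hτ⟩ := hL (-a - L)
  set b := a + τ with hb
  have hbmem : -L ≤ b ∧ b ≤ 0 := by
    constructor
    · have := hτmem.1; simp only [hb]; linarith
    · have := hτmem.2; simp only [hb]; linarith
  -- step 1 : ∫_a^{a+ℓ} u(x) ≈ ∫_a^{a+ℓ} u(x+τ) = ∫_b^{b+ℓ} u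
  have hstep1 : ‖(∫ x in a..(a+ℓ), (u x : ℂ)) - ∫ x in b..(b+ℓ), (u x : ℂ)‖ ≤ ε * ℓ := by
    have hsub : (∫ x in b..(b+ℓ), (u x : ℂ)) = ∫ x in a..(a+ℓ), (u (x + τ) : ℂ) := by
      rw [intervalIntegral.integral_comp_add_right (fun x => (u x : ℂ)) τ]
      have h1 : a + τ = b := rfl
      have h2 : a + ℓ + τ = b + ℓ := by rw [hb]; ring
      rw [h1, h2]
    have hint2 : IntervalIntegrable (fun x : ℝ => (u (x + τ) : ℂ)) volume a (a + ℓ) :=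
      Continuous.intervalIntegrable (by continuity) a (a + ℓ)
    rw [hsub, ← intervalIntegral.integral_sub (bcf_ii u _ _) hint2]
    have hbound : ∀ x ∈ Set.uIoc a (a + ℓ), ‖(u x : ℂ) - u (x + τ)‖ ≤ ε := by
      intro x _
      have h1 : dist (translateR u τ x) (u x) ≤ dist (translateR u τ) u :=
        BoundedContinuousFunction.dist_coe_le_dist x
      rw [translateR_apply] at h1
      rw [norm_sub_rev, ← dist_eq_norm]
      exact le_trans h1 hτ
    have := intervalIntegral.norm_integral_le_of_norm_le_const hbound
    calc ‖∫ x in a..(a+ℓ), ((u x : ℂ) - u (x + τ))‖ ≤ ε * |a + ℓ - a| := this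
      _ = ε * ℓ := by rw [add_sub_cancel_left, abs_of_pos hℓ]
  -- step 2 : ∫_b^{b+ℓ} u ≈ ∫_0^ℓ u
  have hstep2 : ‖(∫ x in b..(b+ℓ), (u x : ℂ)) - ∫ x in (0:ℝ)..ℓ, (u x : ℂ)‖ ≤ 2 * L * ‖u‖ := by
    have hadj1 : (∫ x in b..(0:ℝ), (u x : ℂ)) + ∫ x in (0:ℝ)..(b+ℓ), (u x : ℂ)
        = ∫ x in b..(b+ℓ), (u x : ℂ) :=
      intervalIntegral.integral_add_adjacent_intervals (bcf_ii u _ _) (bcf_ii u _ _)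
    have hadj2 : (∫ x in (0:ℝ)..ℓ, (u x : ℂ)) + ∫ x in ℓ..(b+ℓ), (u x : ℂ)
        = ∫ x in (0:ℝ)..(b+ℓ), (u x : ℂ) :=
      intervalIntegral.integral_add_adjacent_intervals (bcf_ii u _ _) (bcf_ii u _ _)
    have heq : (∫ x in b..(b+ℓ), (u x : ℂ)) - ∫ x in (0:ℝ)..ℓ, (u x : ℂ)
        = (∫ x in b..(0:ℝ), (u x : ℂ)) + ∫ x in ℓ..(b+ℓ), (u x : ℂ) := by
      rw [← hadj1, ← hadj2]; ring
    rw [heq]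
    have h1 : ‖∫ x in b..(0:ℝ), (u x : ℂ)‖ ≤ ‖u‖ * L := by
      have := intervalIntegral.norm_integral_le_of_norm_le_const
        (C := ‖u‖) (f := fun x => u x) (a := b) (b := (0:ℝ)) (fun x _ => u.norm_coe_le_norm x)
      refine le_trans this ?_
      have : |(0:ℝ) - b| ≤ L := by
        rw [abs_le]; constructor <;> [linarith [hbmem.1, hbmem.2]; linarith [hbmem.1, hbmem.2]]
      exact mul_le_mul_of_nonneg_left this (norm_nonneg u)
    have h2 : ‖∫ x in ℓ..(b+ℓ), (u x : ℂ)‖ ≤ ‖u‖ * L := by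
      have := intervalIntegral.norm_integral_le_of_norm_le_const
        (C := ‖u‖) (f := fun x => u x) (a := ℓ) (b := b + ℓ) (fun x _ => u.norm_coe_le_norm x)
      refine le_trans this ?_
      have : |b + ℓ - ℓ| ≤ L := by
        rw [abs_le]; constructor <;> [linarith [hbmem.1, hbmem.2]; linarith [hbmem.1, hbmem.2]]
      exact mul_le_mul_of_nonneg_left this (norm_nonneg u)
    calc ‖(∫ x in b..(0:ℝ), (u x : ℂ)) + ∫ x in ℓ..(b+ℓ), (u x : ℂ)‖
        ≤ ‖∫ x in b..(0:ℝ), (u x : ℂ)‖ + ‖∫ x in ℓ..(b+ℓ), (u x : ℂ)‖ := norm_add_le _ _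
      _ ≤ ‖u‖ * L + ‖u‖ * L := add_le_add h1 h2
      _ = 2 * L * ‖u‖ := by ring
  -- combine
  have hnorm : ‖avg u a ℓ - avg u 0 ℓ‖
      = ℓ⁻¹ * ‖(∫ x in a..(a+ℓ), (u x : ℂ)) - ∫ x in (0:ℝ)..(0+ℓ), (u x : ℂ)‖ := by
    rw [avg, avg, ← smul_sub, norm_smul, Real.norm_eq_abs, abs_of_pos (inv_pos.2 hℓ)]
  rw [hnorm]
  have hzℓ : (0:ℝ) + ℓ = ℓ := by ring
  rw [hzℓ]
  have htri : ‖(∫ x in a..(a+ℓ), (u x : ℂ)) - ∫ x in (0:ℝ)..ℓ, (u x : ℂ)‖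
      ≤ ε * ℓ + 2 * L * ‖u‖ := by
    have hsplit : (∫ x in a..(a+ℓ), (u x : ℂ)) - ∫ x in (0:ℝ)..ℓ, (u x : ℂ)
        = ((∫ x in a..(a+ℓ), (u x : ℂ)) - ∫ x in b..(b+ℓ), (u x : ℂ))
          + ((∫ x in b..(b+ℓ), (u x : ℂ)) - ∫ x in (0:ℝ)..ℓ, (u x : ℂ)) := by ring
    rw [hsplit]
    exact le_trans (norm_add_le _ _) (add_le_add hstep1 hstep2)
  calc ℓ⁻¹ * ‖(∫ x in a..(a+ℓ), (u x : ℂ)) - ∫ x in (0:ℝ)..ℓ, (u x : ℂ)‖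
      ≤ ℓ⁻¹ * (ε * ℓ + 2 * L * ‖u‖) :=
        mul_le_mul_of_nonneg_left htri (le_of_lt (inv_pos.2 hℓ))
    _ = ε + 2 * L * ‖u‖ / ℓ := by field_simp

lemma primitive_cont (u : ℝ →ᵇ ℂ) : Continuous (fun r : ℝ => ∫ x in (0:ℝ)..r, (u x : ℂ)) :=
  intervalIntegral.continuous_primitive (fun a b => bcf_ii u a b) 0

lemma avg_eq_primitive (u : ℝ →ᵇ ℂ) (x ℓ : ℝ) :
    avg u x ℓ = ℓ⁻¹ • ((∫ t in (0:ℝ)..(x+ℓ), (u t : ℂ)) - ∫ t in (0:ℝ)..x, (u t : ℂ)) := by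
  unfold avg
  congr 1
  rw [eq_sub_iff_add_eq, add_comm]
  exact intervalIntegral.integral_add_adjacent_intervals (bcf_ii u _ _) (bcf_ii u _ _)

lemma continuous_avg (u : ℝ →ᵇ ℂ) (ℓ : ℝ) : Continuous (fun x => avg u x ℓ) := by
  have h := primitive_cont u
  simp only [avg_eq_primitive]
  exact (continuous_const : Continuous fun _ : ℝ => (ℓ⁻¹ : ℝ)).smul ((h.comp (by continuity)).sub h)

lemma avg_as_inner (u : ℝ →ᵇ ℂ) (x ℓ : ℝ) :
    avg u x ℓ = ℓ⁻¹ • ∫ y in (0:ℝ)..ℓ, (u (x + y) : ℂ) := by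
  unfold avg
  congr 1
  have h := intervalIntegral.integral_comp_add_right (a := (0:ℝ)) (b := ℓ) (fun t => (u t : ℂ)) x
  calc ∫ t in x..x+ℓ, (u t : ℂ) = ∫ t in 0+x..ℓ+x, (u t : ℂ) := by
        rw [zero_add, add_comm x ℓ]
    _ = ∫ y in (0:ℝ)..ℓ, (u (y + x) : ℂ) := h.symm
    _ = ∫ y in (0:ℝ)..ℓ, (u (x + y) : ℂ) := by simp [add_comm]

lemma double_swap (u : ℝ →ᵇ ℂ) {S T : ℝ} (hS : 0 < S) (hT : 0 < T) :
    (∫ x in (0:ℝ)..S, (∫ y in (0:ℝ)..T, (u (x + y) : ℂ)))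
      = ∫ y in (0:ℝ)..T, (∫ x in (0:ℝ)..S, (u (x + y) : ℂ)) := by
  haveI h1 : IsFiniteMeasure (volume.restrict (Set.Ioc (0:ℝ) S)) :=
    ⟨by rw [Measure.restrict_apply_univ]; simp [Real.volume_Ioc]⟩
  haveI h2 : IsFiniteMeasure (volume.restrict (Set.Ioc (0:ℝ) T)) :=
    ⟨by rw [Measure.restrict_apply_univ]; simp [Real.volume_Ioc]⟩
  have hInt : Integrable (Function.uncurry fun x y => (u (x + y) : ℂ))
      ((volume.restrict (Set.Ioc (0:ℝ) S)).prod (volume.restrict (Set.Ioc (0:ℝ) T))) := by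
    constructor
    · exact (u.continuous.comp (continuous_fst.add continuous_snd)).aestronglyMeasurable
    · exact MeasureTheory.HasFiniteIntegral.of_bounded (C := ‖u‖)
        (Filter.Eventually.of_forall fun p => u.norm_coe_le_norm _)
  have hswap := MeasureTheory.integral_integral_swap hInt
  simp only [intervalIntegral.integral_of_le hS.le, intervalIntegral.integral_of_le hT.le]
  exact hswap

lemma avg_two_scale (u : ℝ →ᵇ ℂ) {ε L : ℝ}
    (hL : ∀ a : ℝ, ∃ τ, τ ∈ Set.Icc a (a + L) ∧ dist (translateR u τ) u ≤ ε)
    (hL0 : 0 ≤ L) {S T : ℝ} (hS : 0 < S) (hT : 0 < T) :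
    ‖avg u 0 T - avg u 0 S‖ ≤ (ε + 2 * L * ‖u‖ / T) + (ε + 2 * L * ‖u‖ / S) := by
  set I : ℂ := S⁻¹ • ∫ x in (0:ℝ)..S, avg u x T with hI
  have claim1 : ‖I - avg u 0 T‖ ≤ ε + 2 * L * ‖u‖ / T := by
    have hint1 : IntervalIntegrable (fun x => avg u x T) volume 0 S :=
      (continuous_avg u T).intervalIntegrable _ _
    have hconst : (S⁻¹ : ℝ) • ∫ x in (0:ℝ)..S, avg u 0 T = avg u 0 T := by
      rw [intervalIntegral.integral_const, sub_zero, smul_smul, inv_mul_cancel₀ (ne_of_gt hS),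
        one_smul]
    have hId : I - avg u 0 T = S⁻¹ • ∫ x in (0:ℝ)..S, (avg u x T - avg u 0 T) := by
      rw [intervalIntegral.integral_sub hint1 (intervalIntegrable_const), smul_sub, ← hI, hconst]
    rw [hId, norm_smul, Real.norm_eq_abs, abs_of_pos (inv_pos.2 hS)]
    have hb := intervalIntegral.norm_integral_le_of_norm_le_const
      (C := ε + 2 * L * ‖u‖ / T) (f := fun x => avg u x T - avg u 0 T) (a := (0:ℝ)) (b := S)
      (fun x _ => avg_shift_bound u hL hL0 x T hT)
    calc S⁻¹ * ‖∫ x in (0:ℝ)..S, (avg u x T - avg u 0 T)‖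
        ≤ S⁻¹ * ((ε + 2 * L * ‖u‖ / T) * |S - 0|) :=
          mul_le_mul_of_nonneg_left hb (le_of_lt (inv_pos.2 hS))
      _ = ε + 2 * L * ‖u‖ / T := by rw [sub_zero, abs_of_pos hS]; field_simp
  have claim2 : I = T⁻¹ • ∫ y in (0:ℝ)..T, avg u y S := by
    calc I = S⁻¹ • ∫ x in (0:ℝ)..S, (T⁻¹ • ∫ y in (0:ℝ)..T, (u (x + y) : ℂ)) := by
          rw [hI]; congr 1; exact intervalIntegral.integral_congr (fun x _ => avg_as_inner u x T)
      _ = S⁻¹ • T⁻¹ • ∫ x in (0:ℝ)..S, (∫ y in (0:ℝ)..T, (u (x + y) : ℂ)) := by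
          rw [intervalIntegral.integral_smul]
      _ = T⁻¹ • S⁻¹ • ∫ y in (0:ℝ)..T, (∫ x in (0:ℝ)..S, (u (x + y) : ℂ)) := by
          rw [double_swap u hS hT, smul_comm]
      _ = T⁻¹ • ∫ y in (0:ℝ)..T, (S⁻¹ • ∫ x in (0:ℝ)..S, (u (x + y) : ℂ)) := by
          rw [intervalIntegral.integral_smul]
      _ = T⁻¹ • ∫ y in (0:ℝ)..T, avg u y S := by
          congr 1
          refine intervalIntegral.integral_congr (fun y _ => ?_)
          rw [avg_as_inner u y S]
          congr 1
          exact intervalIntegral.integral_congr (fun x _ => by rw [add_comm])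
  have claim3 : ‖I - avg u 0 S‖ ≤ ε + 2 * L * ‖u‖ / S := by
    have hint1 : IntervalIntegrable (fun y => avg u y S) volume 0 T :=
      (continuous_avg u S).intervalIntegrable _ _
    have hconst : (T⁻¹ : ℝ) • ∫ y in (0:ℝ)..T, avg u 0 S = avg u 0 S := by
      rw [intervalIntegral.integral_const, sub_zero, smul_smul, inv_mul_cancel₀ (ne_of_gt hT),
        one_smul]
    have hId : I - avg u 0 S = T⁻¹ • ∫ y in (0:ℝ)..T, (avg u y S - avg u 0 S) := by
      rw [intervalIntegral.integral_sub hint1 (intervalIntegrable_const), smul_sub, ← claim2,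
        hconst]
    rw [hId, norm_smul, Real.norm_eq_abs, abs_of_pos (inv_pos.2 hT)]
    have hb := intervalIntegral.norm_integral_le_of_norm_le_const
      (C := ε + 2 * L * ‖u‖ / S) (f := fun y => avg u y S - avg u 0 S) (a := (0:ℝ)) (b := T)
      (fun y _ => avg_shift_bound u hL hL0 y S hS)
    calc T⁻¹ * ‖∫ y in (0:ℝ)..T, (avg u y S - avg u 0 S)‖
        ≤ T⁻¹ * ((ε + 2 * L * ‖u‖ / S) * |T - 0|) :=
          mul_le_mul_of_nonneg_left hb (le_of_lt (inv_pos.2 hT))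
      _ = ε + 2 * L * ‖u‖ / S := by rw [sub_zero, abs_of_pos hT]; field_simp
  calc ‖avg u 0 T - avg u 0 S‖ = ‖(I - avg u 0 S) - (I - avg u 0 T)‖ := by ring_nf
    _ ≤ ‖I - avg u 0 S‖ + ‖I - avg u 0 T‖ := norm_sub_le _ _
    _ ≤ (ε + 2 * L * ‖u‖ / T) + (ε + 2 * L * ‖u‖ / S) := by
        rw [add_comm (ε + 2 * L * ‖u‖ / T)]
        exact add_le_add claim3 claim1

noncomputable def apMean (u : ℝ →ᵇ ℂ) : ℂ := limUnder atTop (fun T : ℝ => avg u 0 T)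

lemma tendsto_avg0 (u : ℝ →ᵇ ℂ) (hu : IsAP u) :
    Tendsto (fun T : ℝ => avg u 0 T) atTop (𝓝 (apMean u)) := by
  have hc : CauchySeq (fun T : ℝ => avg u 0 T) := by
    rw [Metric.cauchySeq_iff']
    intro κ hκ
    obtain ⟨L, hL0, hL⟩ := exists_almost_periods u hu (show (0:ℝ) < κ/4 by linarith)
    set t : ℝ := 2 * L * ‖u‖ with ht
    have ht0 : 0 ≤ t := by positivity
    set T₀ : ℝ := max 1 (8 * t / κ + 1) with hT₀
    have hT₀pos : 0 < T₀ := lt_of_lt_of_le zero_lt_one (le_max_left _ _)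
    have hT₀big : 8 * t / κ + 1 ≤ T₀ := le_max_right _ _
    refine ⟨T₀, fun T hT => ?_⟩
    have hTpos : 0 < T := lt_of_lt_of_le hT₀pos hT
    have key := avg_two_scale u hL (le_of_lt hL0) (S := T₀) (T := T) hT₀pos hTpos
    rw [dist_eq_norm]
    refine lt_of_le_of_lt key ?_
    have h1 : t / T₀ ≤ κ / 8 := by
      rw [div_le_iff₀ hT₀pos]
      have : κ / 8 * (8 * t / κ + 1) ≤ κ / 8 * T₀ :=
        mul_le_mul_of_nonneg_left hT₀big (by positivity)
      have heq : κ / 8 * (8 * t / κ + 1) = t + κ / 8 := by field_simp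
      nlinarith
    have h2 : t / T ≤ t / T₀ := div_le_div_of_nonneg_left ht0 hT₀pos hT
    have e1 : 2 * L * ‖u‖ / T = t / T := by rw [ht]
    have e2 : 2 * L * ‖u‖ / T₀ = t / T₀ := by rw [ht]
    rw [e1, e2]
    linarith
  obtain ⟨c, hc'⟩ := cauchySeq_tendsto_of_complete hc
  rw [apMean, hc'.limUnder_eq]
  exact hc'

lemma tendsto_avg_apMean (u : ℝ →ᵇ ℂ) (hu : IsAP u) (a ℓ : ℝ → ℝ)
    (hℓ : Tendsto ℓ atTop atTop) :
    Tendsto (fun T : ℝ => avg u (a T) (ℓ T)) atTop (𝓝 (apMean u)) := by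
  have h0 := tendsto_avg0 u hu
  have h1 : Tendsto (fun T => avg u 0 (ℓ T)) atTop (𝓝 (apMean u)) := h0.comp hℓ
  rw [Metric.tendsto_nhds] at h1 ⊢
  intro κ hκ
  obtain ⟨L, hL0, hL⟩ := exists_almost_periods u hu (show (0:ℝ) < κ/4 by linarith)
  set t : ℝ := 2 * L * ‖u‖ with ht
  have ht0 : 0 ≤ t := by positivity
  have hev1 := h1 (κ/4) (by linarith)
  have hev2 : ∀ᶠ T in atTop, max 1 (4 * t / κ + 1) ≤ ℓ T := hℓ.eventually_ge_atTop _
  filter_upwards [hev1, hev2] with T h1T h2T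
  have hℓpos : 0 < ℓ T := lt_of_lt_of_le zero_lt_one (le_trans (le_max_left _ _) h2T)
  have hshift := avg_shift_bound u hL (le_of_lt hL0) (a T) (ℓ T) hℓpos
  have hq : t / ℓ T ≤ κ / 4 := by
    rw [div_le_iff₀ hℓpos]
    have hbig : 4 * t / κ + 1 ≤ ℓ T := le_trans (le_max_right _ _) h2T
    have : κ / 4 * (4 * t / κ + 1) ≤ κ / 4 * ℓ T :=
      mul_le_mul_of_nonneg_left hbig (by positivity)
    have heq : κ / 4 * (4 * t / κ + 1) = t + κ / 4 := by field_simp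
    nlinarith
  rw [dist_eq_norm] at h1T ⊢
  have htri : ‖avg u (a T) (ℓ T) - apMean u‖
      ≤ ‖avg u (a T) (ℓ T) - avg u 0 (ℓ T)‖ + ‖avg u 0 (ℓ T) - apMean u‖ := by
    have : avg u (a T) (ℓ T) - apMean u
        = (avg u (a T) (ℓ T) - avg u 0 (ℓ T)) + (avg u 0 (ℓ T) - apMean u) := by ring
    rw [this]; exact norm_add_le _ _
  have e1 : 2 * L * ‖u‖ / ℓ T = t / ℓ T := by rw [ht]
  rw [e1] at hshift
  calc ‖avg u (a T) (ℓ T) - apMean u‖ ≤ (κ/4 + t / ℓ T) + ‖avg u 0 (ℓ T) - apMean u‖ :=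
        le_trans htri (add_le_add_left hshift _)
    _ < κ := by linarith

lemma apMean_norm_le (u : ℝ →ᵇ ℂ) (hu : IsAP u) : ‖apMean u‖ ≤ ‖u‖ := by
  have h := tendsto_avg0 u hu
  have hn : Tendsto (fun T : ℝ => ‖avg u 0 T‖) atTop (𝓝 ‖apMean u‖) :=
    (continuous_norm.tendsto _).comp h
  refine le_of_tendsto hn ?_
  filter_upwards [eventually_gt_atTop (0:ℝ)] with T hT
  exact norm_avg_le u hT

lemma translateR_add (u v : ℝ →ᵇ ℂ) (τ : ℝ) :
    translateR (u + v) τ = translateR u τ + translateR v τ := by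
  ext x; simp

lemma translateR_neg (u : ℝ →ᵇ ℂ) (τ : ℝ) : translateR (-u) τ = -(translateR u τ) := by
  ext x; simp

lemma translateR_smul (c : ℂ) (u : ℝ →ᵇ ℂ) (τ : ℝ) :
    translateR (c • u) τ = c • translateR u τ := by
  ext x; simp

lemma isAP_of_subset_compact {u : ℝ →ᵇ ℂ} {K : Set (ℝ →ᵇ ℂ)} (hK : IsCompact K)
    (h : ∀ τ, translateR u τ ∈ K) : IsAP u :=
  IsCompact.of_isClosed_subset hK isClosed_closure
    (closure_minimal (Set.range_subset_iff.2 h) hK.isClosed)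

lemma isAP_add {u v : ℝ →ᵇ ℂ} (hu : IsAP u) (hv : IsAP v) : IsAP (u + v) := by
  refine isAP_of_subset_compact ((hu.prod hv).image continuous_add) (fun τ => ?_)
  exact ⟨(translateR u τ, translateR v τ),
    Set.mk_mem_prod (subset_closure (Set.mem_range_self τ)) (subset_closure (Set.mem_range_self τ)),
    (translateR_add u v τ).symm⟩

lemma isAP_neg {u : ℝ →ᵇ ℂ} (hu : IsAP u) : IsAP (-u) := by
  refine isAP_of_subset_compact (hu.image continuous_neg) (fun τ => ?_)
  exact ⟨translateR u τ, subset_closure (Set.mem_range_self τ), (translateR_neg u τ).symm⟩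

lemma isAP_sub {u v : ℝ →ᵇ ℂ} (hu : IsAP u) (hv : IsAP v) : IsAP (u - v) := by
  have := isAP_add hu (isAP_neg hv)
  simpa [sub_eq_add_neg] using this

lemma isAP_smul (c : ℂ) {u : ℝ →ᵇ ℂ} (hu : IsAP u) : IsAP (c • u) := by
  refine isAP_of_subset_compact (hu.image (continuous_const_smul c)) (fun τ => ?_)
  exact ⟨translateR u τ, subset_closure (Set.mem_range_self τ), (translateR_smul c u τ).symm⟩

lemma isAP_translateR {u : ℝ →ᵇ ℂ} (hu : IsAP u) (c : ℝ) : IsAP (translateR u c) := by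
  refine IsCompact.of_isClosed_subset hu isClosed_closure (closure_mono ?_)
  rintro _ ⟨τ, rfl⟩
  rw [translateR_comp]
  exact Set.mem_range_self _

noncomputable def charB (lam : ℝ) : ℝ →ᵇ ℂ :=
  BoundedContinuousFunction.mkOfBound
    ⟨fun x : ℝ => Complex.exp (-(Complex.I * lam * x)), by continuity⟩ 2
    (by
      intro x y
      have h1 : ∀ z : ℝ, ‖Complex.exp (-(Complex.I * lam * z))‖ = 1 := by
        intro z
        have : -(Complex.I * lam * z) = ((-(lam * z) : ℝ) : ℂ) * Complex.I := by
          push_cast; ring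
        rw [this]
        exact Complex.norm_exp_ofReal_mul_I _
      calc dist (Complex.exp (-(Complex.I * lam * x))) (Complex.exp (-(Complex.I * lam * y)))
          ≤ ‖Complex.exp (-(Complex.I * lam * x))‖ + ‖Complex.exp (-(Complex.I * lam * y))‖ :=
            dist_le_norm_add_norm _ _
        _ = 2 := by rw [h1 x, h1 y]; norm_num)

@[simp] lemma charB_apply (lam x : ℝ) : charB lam x = Complex.exp (-(Complex.I * lam * x)) := rfl

lemma charB_norm_apply (lam x : ℝ) : ‖charB lam x‖ = 1 := by
  have : -(Complex.I * lam * x) = ((-(lam * x) : ℝ) : ℂ) * Complex.I := by push_cast; ring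
  rw [charB_apply, this]
  exact Complex.norm_exp_ofReal_mul_I _

lemma charB_add_arg (lam x τ : ℝ) :
    charB lam (x + τ) = charB lam τ * charB lam x := by
  simp only [charB_apply]
  rw [← Complex.exp_add]
  congr 1
  push_cast; ring

lemma translateR_charB_mul (lam : ℝ) (u : ℝ →ᵇ ℂ) (τ : ℝ) :
    translateR (charB lam * u) τ = charB lam τ • (charB lam * translateR u τ) := by
  ext x
  simp only [translateR_apply, BoundedContinuousFunction.coe_mul, Pi.mul_apply,
    BoundedContinuousFunction.coe_smul, Pi.smul_apply, smul_eq_mul]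
  rw [charB_add_arg]
  ring

lemma isAP_charB_mul (lam : ℝ) {u : ℝ →ᵇ ℂ} (hu : IsAP u) : IsAP (charB lam * u) := by
  have hcont : Continuous (fun p : ℂ × (ℝ →ᵇ ℂ) => p.1 • (charB lam * p.2)) := by
    have hmul : Continuous (fun p : ℂ × (ℝ →ᵇ ℂ) => charB lam * p.2) :=
      continuous_const.mul continuous_snd
    exact continuous_fst.smul hmul
  refine isAP_of_subset_compact (((isCompact_sphere (0:ℂ) 1).prod hu).image hcont) (fun τ => ?_)
  refine ⟨(charB lam τ, translateR u τ), Set.mk_mem_prod ?_ (subset_closure (Set.mem_range_self τ)),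
    (translateR_charB_mul lam u τ).symm⟩
  rw [mem_sphere_iff_norm, sub_zero]
  exact charB_norm_apply lam τ

lemma isAP_limit {h : ℕ → ℝ →ᵇ ℂ} {hInf : ℝ →ᵇ ℂ} (hap : ∀ n, IsAP (h n))
    (hlim : Tendsto h atTop (𝓝 hInf)) : IsAP hInf := by
  refine TotallyBounded.isCompact_of_isClosed (TotallyBounded.closure ?_) isClosed_closure
  rw [Metric.totallyBounded_iff]
  intro ε hε
  obtain ⟨n, hn⟩ : ∃ n, dist (h n) hInf < ε / 3 := by
    have := (Metric.tendsto_atTop.1 hlim) (ε/3) (by linarith)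
    obtain ⟨N, hN⟩ := this
    exact ⟨N, hN N le_rfl⟩
  have htb : TotallyBounded (Set.range (translateR (h n))) :=
    ((hap n).totallyBounded).subset subset_closure
  obtain ⟨s, hsfin, hscov⟩ := (Metric.totallyBounded_iff.1 htb) (ε/3) (by linarith)
  refine ⟨s, hsfin, ?_⟩
  rintro _ ⟨τ, rfl⟩
  obtain ⟨c, hc, hc'⟩ : ∃ c ∈ s, translateR (h n) τ ∈ Metric.ball c (ε/3) := by
    have := hscov (Set.mem_range_self τ)
    simpa using this
  have hd : dist (translateR hInf τ) (translateR (h n) τ) < ε / 3 := by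
    rw [dist_translateR]
    rw [dist_comm]
    exact hn
  have : dist (translateR hInf τ) c < ε := by
    have h2 : dist (translateR (h n) τ) c < ε / 3 := Metric.mem_ball.1 hc'
    calc dist (translateR hInf τ) c ≤ dist (translateR hInf τ) (translateR (h n) τ)
          + dist (translateR (h n) τ) c := dist_triangle _ _ _
      _ < ε/3 + ε/3 := add_lt_add hd h2
      _ ≤ ε := by linarith
  simp only [Set.mem_iUnion]
  exact ⟨c, hc, Metric.mem_ball.2 this⟩

lemma apMean_add {u v : ℝ →ᵇ ℂ} (hu : IsAP u) (hv : IsAP v) :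
    apMean (u + v) = apMean u + apMean v := by
  have h1 := tendsto_avg0 (u + v) (isAP_add hu hv)
  have h2 : Tendsto (fun T : ℝ => avg (u + v) 0 T) atTop (𝓝 (apMean u + apMean v)) :=
    (((tendsto_avg0 u hu).add (tendsto_avg0 v hv)).congr (fun T => (avg_add u v 0 T).symm))
  exact tendsto_nhds_unique h1 h2

lemma apMean_smul (c : ℂ) {u : ℝ →ᵇ ℂ} (hu : IsAP u) : apMean (c • u) = c • apMean u := by
  have h1 := tendsto_avg0 (c • u) (isAP_smul c hu)
  have h2 : Tendsto (fun T : ℝ => avg (c • u) 0 T) atTop (𝓝 (c • apMean u)) :=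
    ((tendsto_avg0 u hu).const_smul c).congr (fun T => (avg_smul c u 0 T).symm)
  exact tendsto_nhds_unique h1 h2

lemma apMean_translate {u : ℝ →ᵇ ℂ} (hu : IsAP u) (c : ℝ) :
    apMean (translateR u c) = apMean u := by
  have h1 := tendsto_avg0 (translateR u c) (isAP_translateR hu c)
  have h2 : Tendsto (fun T : ℝ => avg (translateR u c) 0 T) atTop (𝓝 (apMean u)) := by
    have h3 := tendsto_avg_apMean u hu (fun _ => c) id tendsto_id
    refine h3.congr fun T => ?_
    rw [avg_translate]
    simp
  exact tendsto_nhds_unique h1 h2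

lemma norm_le_of_tail {w : ℝ →ᵇ ℂ} (hw : IsAP w) {d M : ℝ}
    (h : ∀ t < d, ‖w t‖ ≤ M) : ∀ x, ‖w x‖ ≤ M := by
  intro x
  refine le_of_forall_pos_le_add fun κ hκ => ?_
  obtain ⟨L, hL0, hL⟩ := exists_almost_periods w hw hκ
  obtain ⟨τ, hτmem, hτ⟩ := hL (d - x - L - 1)
  have hxd : x + τ < d := by
    have h2 := hτmem.2; simp only [Set.mem_Icc] at hτmem; linarith [hτmem.2]
  have h1 : ‖w (x + τ) - w x‖ ≤ κ := by
    have hd := BoundedContinuousFunction.dist_coe_le_dist (f := translateR w τ) (g := w) x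
    rw [← dist_eq_norm]
    exact le_trans hd hτ
  calc ‖w x‖ = ‖w (x + τ) - (w (x + τ) - w x)‖ := by ring_nf
    _ ≤ ‖w (x + τ)‖ + ‖w (x + τ) - w x‖ := norm_sub_le _ _
    _ ≤ M + κ := add_le_add (h _ hxd) h1

lemma key_limit (φ : ℝ → ℂ) (hmeas : AEStronglyMeasurable φ (volume : Measure ℝ))
    {C : ℝ} (hbd : ∀ t, ‖φ t‖ ≤ C) (lam : ℝ) :
    ∃ c : ℂ,
      ((∀ ε > 0, ∃ d : ℝ, ∃ g : ℝ →ᵇ ℂ, IsAP g ∧ ∀ t < d, ‖φ t - g t‖ ≤ ε) →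
      Tendsto (fun T : ℝ => T⁻¹ •
        ∫ t in (-2*T)..(-T), Complex.exp (-(Complex.I * lam * t)) • φ t) atTop (𝓝 c)) ∧
      ((∀ ε > 0, ∃ d : ℝ, ∃ g : ℝ →ᵇ ℂ, IsAP g ∧ ∀ t < d, ‖φ t - g t‖ ≤ ε) →
      ∀ ε > 0, ∀ d : ℝ, ∀ g : ℝ →ᵇ ℂ, IsAP g → (∀ t < d, ‖φ t - g t‖ ≤ ε) →
        ‖c - apMean (charB lam * g)‖ ≤ ε) := by
  set E : ℝ → ℂ := fun t => Complex.exp (-(Complex.I * lam * t)) with hE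
  have hEnorm : ∀ t, ‖E t‖ = 1 := fun t => charB_norm_apply lam t
  set W : ℝ → ℂ := fun T => T⁻¹ • ∫ t in (-2*T)..(-T), E t • φ t with hW
  have hmeasE : AEStronglyMeasurable (fun t : ℝ => E t • φ t) volume := by
    refine AEStronglyMeasurable.smul (?_ : AEStronglyMeasurable E volume) hmeas
    exact (Complex.continuous_exp.comp (by continuity)).aestronglyMeasurable
  have hii : ∀ a b : ℝ, IntervalIntegrable (fun t => E t • φ t) volume a b := by
    intro a b
    rw [intervalIntegrable_iff]
    refine Integrable.mono' (g := fun _ => C) ?_ hmeasE.restrict ?_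
    · refine integrableOn_const (ne_of_lt ?_) (by simp)
      rw [Set.uIoc]
      exact measure_Ioc_lt_top
    · refine Filter.Eventually.of_forall fun t => ?_
      rw [norm_smul, hEnorm, one_mul]
      exact hbd t
  -- comparison with an approximant
  have hcomp : ∀ (ε : ℝ), 0 < ε → ∀ (d : ℝ) (g : ℝ →ᵇ ℂ), (∀ t < d, ‖φ t - g t‖ ≤ ε) →
      ∀ T : ℝ, 0 < T → -d < T → ‖W T - avg (charB lam * g) (-2*T) T‖ ≤ ε := by
    intro ε hε d g happ T hT hdT
    have hgii : IntervalIntegrable (fun t => E t • (g t : ℂ)) volume (-2*T) (-T) :=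
      Continuous.intervalIntegrable (by continuity) _ _
    have havg : avg (charB lam * g) (-2*T) T = T⁻¹ • ∫ t in (-2*T)..(-T), E t • (g t : ℂ) := by
      rw [avg]
      congr 1
      · have : -2*T + T = -T := by ring
        rw [this]
        refine intervalIntegral.integral_congr fun t _ => ?_
        simp [hE, smul_eq_mul]
    rw [havg, hW, ← smul_sub,
      ← intervalIntegral.integral_sub (hii _ _) hgii, norm_smul, Real.norm_eq_abs,
      abs_of_pos (inv_pos.2 hT)]
    have hbound : ∀ t ∈ Set.uIoc (-2*T) (-T), ‖E t • φ t - E t • (g t : ℂ)‖ ≤ ε := by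
      intro t ht
      rw [← smul_sub, norm_smul, hEnorm, one_mul]
      refine happ t ?_
      have h1 : -2*T ≤ -T := by linarith
      rw [Set.uIoc_of_le h1] at ht
      have := ht.2
      linarith
    have := intervalIntegral.norm_integral_le_of_norm_le_const hbound
    calc T⁻¹ * ‖∫ t in (-2*T)..(-T), (E t • φ t - E t • (g t : ℂ))‖
        ≤ T⁻¹ * (ε * |(-T) - (-2*T)|) := mul_le_mul_of_nonneg_left this (le_of_lt (inv_pos.2 hT))
      _ = ε := by
          have : |(-T) - (-2*T)| = T := by rw [abs_of_pos (by linarith : (0:ℝ) < -T - (-2*T))]; ring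
          rw [this]; field_simp
  by_cases happrox : ∀ ε > 0, ∃ d : ℝ, ∃ g : ℝ →ᵇ ℂ, IsAP g ∧ ∀ t < d, ‖φ t - g t‖ ≤ ε
  swap
  · exact ⟨0, fun h => absurd h happrox, fun h => absurd h happrox⟩
  have hcauchy : CauchySeq W := by
    rw [Metric.cauchySeq_iff]
    intro κ hκ
    obtain ⟨d, g, hg, happ⟩ := happrox (κ/5) (by linarith)
    have hgAP : IsAP (charB lam * g) := isAP_charB_mul lam hg
    have hAconv := tendsto_avg_apMean (charB lam * g) hgAP (fun T => -2*T) id tendsto_id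
    have hAcauchy : ∀ᶠ T in (atTop : Filter ℝ),
        dist (avg (charB lam * g) (-2*T) T) (apMean (charB lam * g)) < κ/5 := by
      have := (Metric.tendsto_nhds.1 hAconv) (κ/5) (by linarith)
      simpa using this
    have hev : ∀ᶠ T in (atTop : Filter ℝ),
        dist (W T) (apMean (charB lam * g)) < κ/5 + κ/5 := by
      filter_upwards [hAcauchy, eventually_gt_atTop (0:ℝ), eventually_gt_atTop (-d)]
        with T hA hT hdT
      have h1 := hcomp (κ/5) (by linarith) d g happ T hT hdT
      calc dist (W T) (apMean (charB lam * g))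
          ≤ dist (W T) (avg (charB lam * g) (-2*T) T)
            + dist (avg (charB lam * g) (-2*T) T) (apMean (charB lam * g)) := dist_triangle _ _ _
        _ < κ/5 + κ/5 := by
            rw [dist_eq_norm]
            exact add_lt_add_of_le_of_lt h1 hA
    obtain ⟨T₀, hT₀⟩ := (eventually_atTop).1 hev
    refine ⟨T₀, fun S hS T hT => ?_⟩
    calc dist (W S) (W T) ≤ dist (W S) (apMean (charB lam * g))
          + dist (apMean (charB lam * g)) (W T) := dist_triangle _ _ _
      _ < (κ/5 + κ/5) + (κ/5 + κ/5) := by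
          refine add_lt_add (hT₀ S hS) ?_
          rw [dist_comm]
          exact hT₀ T hT
      _ < κ := by linarith
  obtain ⟨c, hc⟩ := cauchySeq_tendsto_of_complete hcauchy
  refine ⟨c, fun _ => hc, fun _ => ?_⟩
  intro ε hε d g hg happ
  rw [← dist_eq_norm]
  refine le_of_forall_pos_le_add fun κ hκ => ?_
  have hgAP : IsAP (charB lam * g) := isAP_charB_mul lam hg
  have hAconv := tendsto_avg_apMean (charB lam * g) hgAP (fun T => -2*T) id tendsto_id
  have hdist : Tendsto (fun T => dist (W T) (apMean (charB lam * g))) atTop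
      (𝓝 (dist c (apMean (charB lam * g)))) := (hc.dist tendsto_const_nhds)
  refine le_of_tendsto hdist ?_
  have hAcauchy : ∀ᶠ T in (atTop : Filter ℝ),
      dist (avg (charB lam * g) (-2*T) T) (apMean (charB lam * g)) < κ := by
    have := (Metric.tendsto_nhds.1 hAconv) κ hκ
    simpa using this
  filter_upwards [hAcauchy, eventually_gt_atTop (0:ℝ), eventually_gt_atTop (-d)]
    with T hA hT hdT
  have h1 := hcomp ε hε d g happ T hT hdT
  calc dist (W T) (apMean (charB lam * g))
      ≤ dist (W T) (avg (charB lam * g) (-2*T) T)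
        + dist (avg (charB lam * g) (-2*T) T) (apMean (charB lam * g)) := dist_triangle _ _ _
    _ ≤ ε + κ := by
        rw [dist_eq_norm]
        exact add_le_add h1 (le_of_lt hA)

lemma countable_of_isolated {A : Set ℝ}
    (h : ∀ a ∈ A, ∃ ε > 0, ∀ b ∈ A, b ∈ Metric.ball a ε → b = a) : A.Countable := by
  -- map each a to a rational pair
  have hchoice : ∀ a : ℝ, a ∈ A → ∃ pq : ℚ × ℚ, (pq.1 : ℝ) < a ∧ a < (pq.2 : ℝ) ∧
      ∀ b ∈ A, (pq.1 : ℝ) < b → b < (pq.2 : ℝ) → b = a := by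
    intro a ha
    obtain ⟨ε, hε, hiso⟩ := h a ha
    obtain ⟨p, hp1, hp2⟩ := exists_rat_btwn (show a - ε < a by linarith)
    obtain ⟨q, hq1, hq2⟩ := exists_rat_btwn (show a < a + ε by linarith)
    refine ⟨(p, q), hp2, hq1, fun b hb h1 h2 => ?_⟩
    refine hiso b hb ?_
    rw [Metric.mem_ball, Real.dist_eq, abs_lt]
    constructor <;> simp only at h1 h2 <;> linarith
  classical
  let F : ℝ → ℚ × ℚ := fun a => if ha : a ∈ A then (hchoice a ha).choose else (0, 0)
  have hinj : Set.InjOn F A := by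
    intro a ha b hb hab
    simp only [F, dif_pos ha, dif_pos hb] at hab
    obtain ⟨h1a, h2a, h3a⟩ := (hchoice a ha).choose_spec
    obtain ⟨h1b, h2b, h3b⟩ := (hchoice b hb).choose_spec
    rw [hab] at h1a h2a
    exact (h3b a ha h1a h2a)
  rw [Set.countable_iff_exists_injective]
  refine ⟨fun a => Encodable.encode (F a.1), fun a b hab => ?_⟩
  exact Subtype.ext (hinj a.2 b.2 (Encodable.encode_injective hab))

lemma cont_off_countable {φ : ℝ → ℂ}
    (h : ∀ x : ℝ, ∀ ε : ℝ, 0 < ε → ∃ η > 0, ∃ ψ : ℝ → ℂ,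
      ContinuousOn ψ (Metric.ball x η \ {x}) ∧
      ∀ y ∈ Metric.ball x η \ {x}, ‖φ y - ψ y‖ ≤ ε) :
    ∃ D : Set ℝ, D.Countable ∧ ∀ x, x ∉ D → ContinuousAt φ x := by
  classical
  set Bad : ℕ → Set ℝ := fun n =>
    {x : ℝ | ¬ ∃ U ∈ 𝓝 x, ∀ y ∈ U, ∀ z ∈ U, dist (φ y) (φ z) ≤ 3/(n+1)} with hBad
  have hBadIso : ∀ n, ∀ a ∈ Bad n, ∃ ε > 0, ∀ b ∈ Bad n, b ∈ Metric.ball a ε → b = a := by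
    intro n a ha
    obtain ⟨η, hη, ψ, hψcont, hψapp⟩ := h a (1/(n+1)) (by positivity)
    refine ⟨η, hη, fun b hb hbball => ?_⟩
    by_contra hne
    have hbV : b ∈ Metric.ball a η \ {a} := ⟨hbball, by simpa using hne⟩
    have hVopen : IsOpen (Metric.ball a η \ {a}) :=
      Metric.isOpen_ball.sdiff isClosed_singleton
    have hψb : ContinuousAt ψ b :=
      hψcont.continuousAt (hVopen.mem_nhds hbV)
    obtain ⟨δ, hδ, hδ'⟩ := Metric.continuousAt_iff.1 hψb (1/(2*(n+1))) (by positivity)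
    set U : Set ℝ := Metric.ball b δ ∩ (Metric.ball a η \ {a}) with hU
    have hUnhds : U ∈ 𝓝 b :=
      Filter.inter_mem (Metric.ball_mem_nhds b hδ) (hVopen.mem_nhds hbV)
    have hgood : ∀ y ∈ U, ∀ z ∈ U, dist (φ y) (φ z) ≤ 3/(n+1) := by
      intro y hy z hz
      have h1 : dist (φ y) (ψ y) ≤ 1/(n+1) := by
        rw [dist_eq_norm]; exact hψapp y hy.2
      have h2 : dist (ψ y) (ψ b) ≤ 1/(2*(n+1)) := le_of_lt (hδ' hy.1)
      have h3 : dist (ψ b) (ψ z) ≤ 1/(2*(n+1)) := by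
        rw [dist_comm]; exact le_of_lt (hδ' hz.1)
      have h4 : dist (ψ z) (φ z) ≤ 1/(n+1) := by
        rw [dist_comm, dist_eq_norm]; exact hψapp z hz.2
      have h23 : dist (ψ y) (ψ z) ≤ 1/(2*(n+1)) + 1/(2*(n+1)) :=
        le_trans (dist_triangle _ (ψ b) _) (add_le_add h2 h3)
      calc dist (φ y) (φ z) ≤ dist (φ y) (ψ y) + dist (ψ y) (ψ z) + dist (ψ z) (φ z) :=
            dist_triangle4 _ _ _ _
        _ ≤ 1/(n+1) + (1/(2*(n+1)) + 1/(2*(n+1))) + 1/(n+1) :=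
            add_le_add (add_le_add h1 h23) h4
        _ = 3/(n+1) := by field_simp; ring
    exact hb ⟨U, hUnhds, hgood⟩
  refine ⟨⋃ n, Bad n, Set.countable_iUnion (fun n => countable_of_isolated (hBadIso n)), ?_⟩
  intro x hx
  rw [Metric.continuousAt_iff]
  intro κ hκ
  obtain ⟨n, hn⟩ : ∃ n : ℕ, 3/(n+1) < κ := by
    obtain ⟨n, hn⟩ := exists_nat_gt (3/κ)
    refine ⟨n, ?_⟩
    rw [div_lt_iff₀ (by positivity)]
    rw [div_lt_iff₀ hκ] at hn
    nlinarith [hκ]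
  have hxn : x ∉ Bad n := fun hmem => hx (Set.mem_iUnion.2 ⟨n, hmem⟩)
  simp only [hBad, Set.mem_setOf_eq, not_not] at hxn
  obtain ⟨U, hU, hgood⟩ := hxn
  obtain ⟨δ, hδ, hδU⟩ := Metric.mem_nhds_iff.1 hU
  refine ⟨δ, hδ, fun {y} hy => ?_⟩
  have hyU : y ∈ U := hδU hy
  have hxU : x ∈ U := hδU (Metric.mem_ball_self hδ)
  exact lt_of_le_of_lt (hgood y hyU x hxU) hn

lemma aesm_of_cont_off_countable {φ : ℝ → ℂ} {D : Set ℝ} (hD : D.Countable)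
    (h : ∀ x, x ∉ D → ContinuousAt φ x) : AEStronglyMeasurable φ (volume : Measure ℝ) := by
  have hD0 : (volume : Measure ℝ) D = 0 := Set.Countable.measure_zero hD _
  have hDm : MeasurableSet Dᶜ := (Set.Countable.measurableSet hD).compl
  have hcont : ContinuousOn φ Dᶜ := fun x hx => (h x hx).continuousWithinAt
  have h1 : AEStronglyMeasurable φ ((volume : Measure ℝ).restrict Dᶜ) :=
    hcont.aestronglyMeasurable hDm
  have hae : ∀ᵐ x ∂(volume : Measure ℝ), x ∈ Dᶜ := by
    rw [MeasureTheory.ae_iff]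
    simpa using hD0
  rwa [Measure.restrict_eq_self_of_ae_mem hae] at h1

lemma arcPt_eq_arcPt (s : circleSet) {k a κ θ b : ℝ} (h : k * b = k * a + κ * θ) :
    arcPt s k b = arcPt (arcPt s k a) κ θ := by
  apply Subtype.ext
  show (s : ℂ) * Complex.exp (Complex.I * (k * b))
      = ((s : ℂ) * Complex.exp (Complex.I * (k * a))) * Complex.exp (Complex.I * (κ * θ))
  rw [mul_assoc, ← Complex.exp_add]
  congr 2
  have hc : (k : ℂ) * b = (k : ℂ) * a + (κ : ℂ) * θ := by exact_mod_cast h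
  rw [← mul_add, hc]

lemma sap_local_approx (f : circleSet → ℂ) (hf : IsSAP f) (s : circleSet) (k : ℝ)
    (hk : k = -1 ∨ k = 1) :
    ∀ t₀ : ℝ, ∀ ε : ℝ, 0 < ε → ∃ η > 0, ∃ ψ : ℝ → ℂ,
      ContinuousOn ψ (Metric.ball t₀ η \ {t₀}) ∧
      ∀ t ∈ Metric.ball t₀ η \ {t₀}, ‖f (arcPt s k (Real.exp t)) - ψ t‖ ≤ ε := by
  intro t₀ ε hε
  obtain ⟨δ', hδ'Ioo, g₁, g₂, _, _, hg₁, hg₂⟩ := hf (arcPt s k (Real.exp t₀)) ε hε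
  have hδ' : 0 < δ' := hδ'Ioo.1
  obtain ⟨η, hη, hηexp⟩ : ∃ η > 0, ∀ t, |t - t₀| < η → |Real.exp t - Real.exp t₀| < δ' := by
    have hc : ContinuousAt Real.exp t₀ := Real.continuous_exp.continuousAt
    obtain ⟨η, hη, h⟩ := Metric.continuousAt_iff.1 hc δ' hδ'
    refine ⟨η, hη, fun t ht => ?_⟩
    have := h (show dist t t₀ < η by rwa [Real.dist_eq])
    rwa [Real.dist_eq] at this
  classical
  set gM : ℝ →ᵇ ℂ := if k = 1 then g₁ else g₂ with hgM
  set gP : ℝ →ᵇ ℂ := if k = 1 then g₂ else g₁ with hgP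
  set ψ : ℝ → ℂ := fun t => if t < t₀ then gM (Real.log ((Real.exp t₀ - Real.exp t)/δ'))
    else gP (Real.log ((Real.exp t - Real.exp t₀)/δ')) with hψ
  refine ⟨η, hη, ψ, ?_, ?_⟩
  · intro x hx
    have hxne : x ≠ t₀ := by
      intro h; exact hx.2 (by simpa using h)
    rcases lt_or_gt_of_ne hxne with hlt | hgt
    · have hmem : Set.Iio t₀ ∈ 𝓝 x := Iio_mem_nhds hlt
      have hψM : ContinuousAt (fun t => gM (Real.log ((Real.exp t₀ - Real.exp t)/δ'))) x := by
        refine gM.continuous.continuousAt.comp ?_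
        refine ContinuousAt.comp (Real.continuousAt_log ?_) ?_
        · have h1 : Real.exp x < Real.exp t₀ := Real.exp_lt_exp.2 hlt
          exact ne_of_gt (div_pos (sub_pos.2 h1) hδ')
        · exact ((continuous_const.sub Real.continuous_exp).div_const δ').continuousAt
      have hEq : (fun t => gM (Real.log ((Real.exp t₀ - Real.exp t)/δ'))) =ᶠ[𝓝 x] ψ :=
        Filter.eventually_of_mem hmem (fun y hy => (if_pos hy).symm)
      exact (hψM.congr hEq).continuousWithinAt
    · have hmem : Set.Ioi t₀ ∈ 𝓝 x := Ioi_mem_nhds hgt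
      have hψP : ContinuousAt (fun t => gP (Real.log ((Real.exp t - Real.exp t₀)/δ'))) x := by
        refine gP.continuous.continuousAt.comp ?_
        refine ContinuousAt.comp (Real.continuousAt_log ?_) ?_
        · have h1 : Real.exp t₀ < Real.exp x := Real.exp_lt_exp.2 hgt
          exact ne_of_gt (div_pos (sub_pos.2 h1) hδ')
        · exact ((Real.continuous_exp.sub continuous_const).div_const δ').continuousAt
      have hEq : (fun t => gP (Real.log ((Real.exp t - Real.exp t₀)/δ'))) =ᶠ[𝓝 x] ψ :=
        Filter.eventually_of_mem hmem
          (fun y hy => (if_neg (not_lt.2 (le_of_lt hy))).symm)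
      exact (hψP.congr hEq).continuousWithinAt
  · intro t ht
    have htne : t ≠ t₀ := by
      intro h; exact ht.2 (by simpa using h)
    have htball : |t - t₀| < η := by
      have := ht.1; rwa [Metric.mem_ball, Real.dist_eq] at this
    have hexpδ := hηexp t htball
    rcases lt_or_gt_of_ne htne with hlt | hgt
    · -- t < t₀, direction -k
      set θ : ℝ := Real.exp t₀ - Real.exp t with hθ
      have hθpos : 0 < θ := sub_pos.2 (Real.exp_lt_exp.2 hlt)
      have hθδ : θ < δ' := by
        rw [abs_sub_comm] at hexpδ
        calc θ ≤ |θ| := le_abs_self _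
          _ < δ' := by rwa [hθ]
      set x : ℝ := Real.log (θ/δ') with hxdef
      have hx0 : x < 0 := Real.log_neg (div_pos hθpos hδ') ((div_lt_one hδ').2 hθδ)
      have hexpx : δ' * Real.exp x = θ := by
        rw [hxdef, Real.exp_log (div_pos hθpos hδ')]
        field_simp
      have harc : arcPt s k (Real.exp t)
          = arcPt (arcPt s k (Real.exp t₀)) (-k) (δ' * Real.exp x) := by
        rw [hexpx]
        exact arcPt_eq_arcPt s (by ring)
      have hψt : ψ t = gM x := by
        rw [hψ]
        simp only [if_pos hlt]
        rfl
      rw [hψt, harc]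
      rcases hk with hk | hk
      · subst hk
        have hgMe : gM = g₂ := by rw [hgM, if_neg (by norm_num)]
        rw [hgMe]
        have hneg : -(-1 : ℝ) = 1 := by norm_num
        rw [hneg]
        exact le_of_lt (hg₂ x hx0)
      · subst hk
        have hgMe : gM = g₁ := by rw [hgM, if_pos rfl]
        rw [hgMe]
        exact le_of_lt (hg₁ x hx0)
    · -- t > t₀, direction k
      set θ : ℝ := Real.exp t - Real.exp t₀ with hθ
      have hθpos : 0 < θ := sub_pos.2 (Real.exp_lt_exp.2 hgt)
      have hθδ : θ < δ' := by
        calc θ ≤ |θ| := le_abs_self _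
          _ < δ' := by rwa [hθ]
      set x : ℝ := Real.log (θ/δ') with hxdef
      have hx0 : x < 0 := Real.log_neg (div_pos hθpos hδ') ((div_lt_one hδ').2 hθδ)
      have hexpx : δ' * Real.exp x = θ := by
        rw [hxdef, Real.exp_log (div_pos hθpos hδ')]
        field_simp
      have harc : arcPt s k (Real.exp t)
          = arcPt (arcPt s k (Real.exp t₀)) k (δ' * Real.exp x) := by
        rw [hexpx]
        exact arcPt_eq_arcPt s (by ring)
      have hψt : ψ t = gP x := by
        rw [hψ]
        simp only [if_neg (not_lt.2 (le_of_lt hgt))]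
        rfl
      rw [hψt, harc]
      rcases hk with hk | hk
      · subst hk
        have hgPe : gP = g₁ := by rw [hgP, if_neg (by norm_num)]
        rw [hgPe]
        exact le_of_lt (hg₁ x hx0)
      · subst hk
        have hgPe : gP = g₂ := by rw [hgP, if_pos rfl]
        rw [hgPe]
        exact le_of_lt (hg₂ x hx0)

lemma sap_phi_aesm (f : circleSet → ℂ) (hf : IsSAP f) (s : circleSet) (k : ℝ)
    (hk : k = -1 ∨ k = 1) :
    AEStronglyMeasurable (fun t : ℝ => f (arcPt s k (Real.exp t))) (volume : Measure ℝ) := by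
  obtain ⟨D, hD, hcont⟩ := cont_off_countable (φ := fun t => f (arcPt s k (Real.exp t)))
    (fun x ε hε => sap_local_approx f hf s k hk x ε hε)
  exact aesm_of_cont_off_countable hD hcont

lemma norm_charB_le (lam : ℝ) : ‖charB lam‖ ≤ 1 :=
  BoundedContinuousFunction.norm_le (by norm_num) |>.2
    (fun x => le_of_eq (charB_norm_apply lam x))

lemma bohr_eq_apMean (u : ℝ →ᵇ ℂ) (hu : IsAP u) (lam : ℝ) :
    bohrCoeffR (⇑u) lam = apMean (charB lam * u) := by
  have hAP : IsAP (charB lam * u) := isAP_charB_mul lam hu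
  have hℓ : Tendsto (fun T : ℝ => 2 * T) atTop atTop :=
    Tendsto.const_mul_atTop (by norm_num) tendsto_id
  have h1 := tendsto_avg_apMean (charB lam * u) hAP (fun T => -T) (fun T => 2 * T) hℓ
  have h2 : ∀ T : ℝ, avg (charB lam * u) (-T) (2 * T)
      = (2 * T)⁻¹ • ∫ x in (-T)..T, Complex.exp (-(Complex.I * lam * x)) • u x := by
    intro T
    rw [avg]
    have he : -T + 2 * T = T := by ring
    rw [he]
    congr 1
  rw [bohrCoeffR, meanValueR]
  exact (h1.congr (fun T => h2 T)).limUnder_eq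

lemma apMean_char_translate_norm (lam : ℝ) {u : ℝ →ᵇ ℂ} (hu : IsAP u) (c : ℝ) :
    ‖apMean (charB lam * translateR u c)‖ = ‖apMean (charB lam * u)‖ := by
  have h1 : apMean (translateR (charB lam * u) c) = apMean (charB lam * u) :=
    apMean_translate (isAP_charB_mul lam hu) c
  rw [translateR_charB_mul lam u c,
    apMean_smul _ (isAP_charB_mul lam (isAP_translateR hu c))] at h1
  rw [← h1, norm_smul, charB_norm_apply, one_mul]

lemma approx_to_tail (f : SAP.circleSet → ℂ) (s : SAP.circleSet) (k : ℝ) {δ ε : ℝ} (hδ : 0 < δ)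
    (g : ℝ →ᵇ ℂ)
    (h : ∀ x < 0, ‖f (arcPt s k (δ * Real.exp x)) - g x‖ < ε) :
    ∀ t < Real.log δ, ‖f (arcPt s k (Real.exp t)) - translateR g (-Real.log δ) t‖ ≤ ε := by
  intro t ht
  have hx : t - Real.log δ < 0 := by linarith
  have he : δ * Real.exp (t - Real.log δ) = Real.exp t := by
    rw [Real.exp_sub, Real.exp_log hδ]
    field_simp
  have := h (t - Real.log δ) hx
  rw [he] at this
  have harg : translateR g (-Real.log δ) t = g (t - Real.log δ) := by
    rw [translateR_apply, sub_eq_add_neg]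
  rw [harg]
  exact le_of_lt this

lemma circBohr_eq_zero (f : LinfT) (s : SAP.circleSet) (k lam : ℝ) (hk : k = -1 ∨ k = 1)
    (hf : IsSAP (⇑f))
    (happrox : ∀ ε > 0, ∃ δ : ℝ, 0 < δ ∧ ∃ g : ℝ →ᵇ ℂ, IsAP g ∧ bohrCoeffR (⇑g) lam = 0 ∧
      ∀ x < 0, ‖f (arcPt s k (δ * Real.exp x)) - g x‖ < ε) :
    circBohr (⇑f) s k lam = 0 := by
  set φ : ℝ → ℂ := fun t => f (arcPt s k (Real.exp t)) with hφ
  have hmeas : AEStronglyMeasurable φ (volume : Measure ℝ) := sap_phi_aesm (⇑f) hf s k hk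
  have hbd : ∀ t, ‖φ t‖ ≤ ‖f‖ := fun t => lp.norm_apply_le_norm ENNReal.top_ne_zero f _
  obtain ⟨c, hT, hB⟩ := key_limit φ hmeas hbd lam
  have happroxKey : ∀ ε > 0, ∃ d : ℝ, ∃ g : ℝ →ᵇ ℂ, IsAP g ∧ ∀ t < d, ‖φ t - g t‖ ≤ ε := by
    intro ε hε
    obtain ⟨δ, hδ, g, hgAP, _, happ⟩ := happrox ε hε
    exact ⟨Real.log δ, translateR g (-Real.log δ), isAP_translateR hgAP _,
      approx_to_tail (⇑f) s k hδ g happ⟩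
  have hczero : c = 0 := by
    rw [← norm_eq_zero]
    have hle : ∀ ε > 0, ‖c‖ ≤ ε := by
      intro ε hε
      obtain ⟨δ, hδ, g, hgAP, hbohr, happ⟩ := happrox ε hε
      have htail := approx_to_tail (⇑f) s k hδ g happ
      have hb := hB happroxKey ε hε (Real.log δ) (translateR g (-Real.log δ))
        (isAP_translateR hgAP _) htail
      have hzero : apMean (charB lam * translateR g (-Real.log δ)) = 0 := by
        rw [← norm_eq_zero, apMean_char_translate_norm lam hgAP, ← bohr_eq_apMean g hgAP,
          hbohr, norm_zero]
      rw [hzero, sub_zero] at hb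
      exact hb
    have : ‖c‖ ≤ 0 := le_of_forall_pos_le_add (by simpa using hle)
    exact le_antisymm this (norm_nonneg c)
  rw [circBohr, ← hczero]
  exact (hT happroxKey).limUnder_eq

lemma tail_to_approx (f : SAP.circleSet → ℂ) (s : SAP.circleSet) (k : ℝ) {δ ε : ℝ} (hδ : 0 < δ)
    (h : ℝ →ᵇ ℂ)
    (htail : ∀ t < Real.log δ, ‖f (arcPt s k (Real.exp t)) - h t‖ ≤ ε) :
    ∀ x < 0, ‖f (arcPt s k (δ * Real.exp x)) - translateR h (Real.log δ) x‖ ≤ ε := by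
  intro x hx
  have ht : x + Real.log δ < Real.log δ := by linarith
  have he : δ * Real.exp x = Real.exp (x + Real.log δ) := by
    rw [Real.exp_add, Real.exp_log hδ]
    ring
  rw [he, translateR_apply]
  exact htail (x + Real.log δ) ht

lemma forward_core (f : LinfT) (hf : IsSAP (⇑f)) (s : SAP.circleSet) (k : ℝ)
    (hk : k = -1 ∨ k = 1) (Γ : Set ℝ)
    (hspec : ∀ lam : ℝ, lam ∉ Γ → circBohr (⇑f) s k lam = 0)
    (δseq : ℕ → ℝ) (hδseq : ∀ n, 0 < δseq n)
    (gseq : ℕ → ℝ →ᵇ ℂ) (hgAP : ∀ n, IsAP (gseq n))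
    (happ : ∀ n : ℕ, ∀ x < 0, ‖f (arcPt s k (δseq n * Real.exp x)) - gseq n x‖ < 1/(n+1)) :
    ∃ h : ℝ →ᵇ ℂ, IsAP h ∧ (∀ lam : ℝ, lam ∉ Γ → apMean (charB lam * h) = 0) ∧
      ∀ n : ℕ, ∀ t < Real.log (δseq n), ‖f (arcPt s k (Real.exp t)) - h t‖ ≤ 2/(n+1) := by
  set φ : ℝ → ℂ := fun t => f (arcPt s k (Real.exp t)) with hφ
  set d : ℕ → ℝ := fun n => Real.log (δseq n) with hd
  set G : ℕ → ℝ →ᵇ ℂ := fun n => translateR (gseq n) (-(d n)) with hG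
  have hGAP : ∀ n, IsAP (G n) := fun n => isAP_translateR (hgAP n) _
  have htail : ∀ n, ∀ t < d n, ‖φ t - G n t‖ ≤ 1/(n+1) :=
    fun n => approx_to_tail (⇑f) s k (hδseq n) (gseq n) (happ n)
  -- Cauchy estimates
  have hGdiff : ∀ n m : ℕ, ‖G n - G m‖ ≤ 1/(n+1) + 1/(m+1) := by
    intro n m
    have hAP : IsAP (G n - G m) := isAP_sub (hGAP n) (hGAP m)
    have hptwise : ∀ t < min (d n) (d m), ‖(G n - G m) t‖ ≤ 1/(n+1) + 1/(m+1) := by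
      intro t ht
      have h1 := htail n t (lt_of_lt_of_le ht (min_le_left _ _))
      have h2 := htail m t (lt_of_lt_of_le ht (min_le_right _ _))
      have : (G n - G m) t = (G n t - φ t) + (φ t - G m t) := by
        simp only [BoundedContinuousFunction.coe_sub, Pi.sub_apply]
        ring
      rw [this]
      calc ‖(G n t - φ t) + (φ t - G m t)‖ ≤ ‖G n t - φ t‖ + ‖φ t - G m t‖ := norm_add_le _ _
        _ ≤ 1/(n+1) + 1/(m+1) := by
            refine add_le_add ?_ h2
            rw [norm_sub_rev]
            exact h1
    have hall := norm_le_of_tail hAP hptwise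
    refine BoundedContinuousFunction.norm_le (by positivity) |>.2 hall
  have hcauchy : CauchySeq G := by
    rw [Metric.cauchySeq_iff]
    intro κ hκ
    obtain ⟨N, hN⟩ := exists_nat_gt (2/κ)
    refine ⟨N, fun n hn m hm => ?_⟩
    have h1 : (1:ℝ)/(n+1) < κ/2 := by
      rw [div_lt_iff₀ (by positivity)]
      rw [div_lt_iff₀ hκ] at hN
      have hn' : (N:ℝ) ≤ n := Nat.cast_le.2 hn
      nlinarith
    have h2 : (1:ℝ)/(m+1) < κ/2 := by
      rw [div_lt_iff₀ (by positivity)]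
      rw [div_lt_iff₀ hκ] at hN
      have hm' : (N:ℝ) ≤ m := Nat.cast_le.2 hm
      nlinarith
    rw [dist_eq_norm]
    calc ‖G n - G m‖ ≤ 1/(n+1) + 1/(m+1) := hGdiff n m
      _ < κ/2 + κ/2 := add_lt_add h1 h2
      _ = κ := by ring
  obtain ⟨h, hlim⟩ := cauchySeq_tendsto_of_complete hcauchy
  have hAPh : IsAP h := isAP_limit hGAP hlim
  have hGh : ∀ n : ℕ, ‖G n - h‖ ≤ 1/(n+1) := by
    intro n
    rw [← dist_eq_norm]
    refine le_of_forall_pos_le_add fun κ hκ => ?_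
    obtain ⟨m₀, hm₀⟩ := exists_nat_gt (2/κ)
    obtain ⟨m₁, hm₁⟩ := Metric.tendsto_atTop.1 hlim (κ/2) (by linarith)
    set m := max m₀ m₁ with hm
    have hd1 : dist (G n) (G m) ≤ 1/(n+1) + 1/(m+1) := by
      rw [dist_eq_norm]; exact hGdiff n m
    have hd2 : dist (G m) h < κ/2 := hm₁ m (le_max_right _ _)
    have h3 : (1:ℝ)/(m+1) < κ/2 := by
      rw [div_lt_iff₀ (by positivity)]
      rw [div_lt_iff₀ hκ] at hm₀
      have : (m₀:ℝ) ≤ m := Nat.cast_le.2 (le_max_left _ _)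
      nlinarith
    calc dist (G n) h ≤ dist (G n) (G m) + dist (G m) h := dist_triangle _ _ _
      _ ≤ (1/(n+1) + 1/(m+1)) + κ/2 := add_le_add hd1 (le_of_lt hd2)
      _ ≤ 1/(n+1) + κ := by linarith
  refine ⟨h, hAPh, ?_, ?_⟩
  · -- spectrum
    intro lam hlam
    have hmeas : AEStronglyMeasurable φ (volume : Measure ℝ) := sap_phi_aesm (⇑f) hf s k hk
    have hbd : ∀ t, ‖φ t‖ ≤ ‖f‖ := fun t => lp.norm_apply_le_norm ENNReal.top_ne_zero f _
    obtain ⟨c, hT, hB⟩ := key_limit φ hmeas hbd lam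
    have happroxKey : ∀ ε > 0, ∃ dd : ℝ, ∃ g : ℝ →ᵇ ℂ, IsAP g ∧ ∀ t < dd, ‖φ t - g t‖ ≤ ε := by
      intro ε hε
      obtain ⟨n, hn⟩ := exists_nat_gt (1/ε)
      refine ⟨d n, G n, hGAP n, fun t ht => le_trans (htail n t ht) ?_⟩
      rw [div_le_iff₀ (by positivity)]
      rw [div_lt_iff₀ hε] at hn
      nlinarith
    have hceq : c = circBohr (⇑f) s k lam := by
      rw [circBohr]
      exact ((hT happroxKey).limUnder_eq).symm
    have hc0 : c = 0 := by rw [hceq]; exact hspec lam hlam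
    have hGn : ∀ n : ℕ, ‖apMean (charB lam * G n)‖ ≤ 1/(n+1) := by
      intro n
      have := hB happroxKey (1/(n+1)) (by positivity) (d n) (G n) (hGAP n) (htail n)
      rw [hc0, zero_sub, norm_neg] at this
      exact this
    rw [← norm_eq_zero]
    have hle : ∀ κ : ℝ, 0 < κ → ‖apMean (charB lam * h)‖ ≤ κ := by
      intro κ hκ
      obtain ⟨n, hn⟩ := exists_nat_gt (2/κ)
      have hsplit : charB lam * h = charB lam * (h - G n) + charB lam * G n := by ring
      have hm : apMean (charB lam * h)
          = apMean (charB lam * (h - G n)) + apMean (charB lam * G n) := by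
        rw [hsplit]
        exact apMean_add (isAP_charB_mul lam (isAP_sub hAPh (hGAP n)))
          (isAP_charB_mul lam (hGAP n))
      have h1 : ‖apMean (charB lam * (h - G n))‖ ≤ ‖h - G n‖ := by
        refine le_trans (apMean_norm_le _ (isAP_charB_mul lam (isAP_sub hAPh (hGAP n)))) ?_
        calc ‖charB lam * (h - G n)‖ ≤ ‖charB lam‖ * ‖h - G n‖ := norm_mul_le _ _
          _ ≤ 1 * ‖h - G n‖ := by
              exact mul_le_mul_of_nonneg_right (norm_charB_le lam) (norm_nonneg _)
          _ = ‖h - G n‖ := one_mul _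
      have h2 : ‖h - G n‖ ≤ 1/(n+1) := by rw [norm_sub_rev]; exact hGh n
      have h3 : (1:ℝ)/(n+1) < κ/2 := by
        rw [div_lt_iff₀ (by positivity)]
        rw [div_lt_iff₀ hκ] at hn
        nlinarith
      calc ‖apMean (charB lam * h)‖
          ≤ ‖apMean (charB lam * (h - G n))‖ + ‖apMean (charB lam * G n)‖ := by
            rw [hm]; exact norm_add_le _ _
        _ ≤ 1/(n+1) + 1/(n+1) := add_le_add (le_trans h1 h2) (hGn n)
        _ ≤ κ := by linarith
    have : ‖apMean (charB lam * h)‖ ≤ 0 :=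
      le_of_forall_pos_le_add (by simpa using fun κ hκ => hle κ hκ)
    exact le_antisymm this (norm_nonneg _)
  · -- tail approximation by h
    intro n t ht
    have h1 := htail n t ht
    have h2 : ‖G n t - h t‖ ≤ 1/(n+1) := by
      have := BoundedContinuousFunction.norm_coe_le_norm (G n - h) t
      simp only [BoundedContinuousFunction.coe_sub, Pi.sub_apply] at this
      exact le_trans this (hGh n)
    have hsplit : φ t - h t = (φ t - G n t) + (G n t - h t) := by ring
    calc ‖φ t - h t‖ ≤ ‖φ t - G n t‖ + ‖G n t - h t‖ := by
          rw [hsplit]; exact norm_add_le _ _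
      _ ≤ 1/(n+1) + 1/(n+1) := add_le_add h1 h2
      _ = 2/(n+1) := by ring

end APWork

open SAP in
theorem stmt3 (S : Set ℂ) (hScirc : S ⊆ circleSet) (hScl : IsClosed S)
    (Sig : ℂ → ℝ → Set ℝ)
    (hSig : ∀ s ∈ S, ∀ k : ℝ, k = -1 ∨ k = 1 → IsUnitalSemigroup (Sig s k))
    (f : LinfT) (hf : IsSAP ⇑f)
    (hfc : ContinuousOn (⇑f) {z : circleSet | (z : ℂ) ∉ S}) :
    (∀ s : circleSet, (s : ℂ) ∈ S → ∀ k : ℝ, k = -1 ∨ k = 1 →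
        sapSpec (⇑f) s k ⊆ Sig (s : ℂ) k)
      ↔
    (∀ s : circleSet, (s : ℂ) ∈ S → ∀ ε : ℝ, 0 < ε →
      ∃ δ : ℝ, δ ∈ Set.Ioo (0 : ℝ) Real.pi ∧
      ∃ g₁ g₂ : ℝ →ᵇ ℂ, IsAP g₁ ∧ IsAP g₂ ∧
        apSpec (⇑g₁) ⊆ Sig (s : ℂ) (-1) ∧ apSpec (⇑g₂) ⊆ Sig (s : ℂ) 1 ∧
        (∀ x : ℝ, x < 0 → ‖f (arcPt s (-1) (δ * Real.exp x)) - g₁ x‖ < ε) ∧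
        (∀ x : ℝ, x < 0 → ‖f (arcPt s 1 (δ * Real.exp x)) - g₂ x‖ < ε)) := by
  open APWork in
  constructor
  · -- forward direction
    intro hspec s hs ε hε
    have hseq : ∀ n : ℕ, ∃ δ : ℝ, δ ∈ Set.Ioo (0:ℝ) Real.pi ∧
        ∃ g₁ g₂ : ℝ →ᵇ ℂ, IsAP g₁ ∧ IsAP g₂ ∧
        (∀ x : ℝ, x < 0 → ‖f (arcPt s (-1) (δ * Real.exp x)) - g₁ x‖ < 1/(n+1)) ∧
        (∀ x : ℝ, x < 0 → ‖f (arcPt s 1 (δ * Real.exp x)) - g₂ x‖ < 1/(n+1)) :=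
      fun n => hf s (1/(n+1)) (by positivity)
    choose δseq hδIoo g1seq g2seq hg1AP hg2AP happ1 happ2 using hseq
    have hδpos : ∀ n, 0 < δseq n := fun n => (hδIoo n).1
    have hspec1 : ∀ lam : ℝ, lam ∉ Sig (s:ℂ) (-1) → circBohr (⇑f) s (-1) lam = 0 := by
      intro lam hlam
      by_contra hne
      exact hlam (hspec s hs (-1) (Or.inl rfl) hne)
    have hspec2 : ∀ lam : ℝ, lam ∉ Sig (s:ℂ) 1 → circBohr (⇑f) s 1 lam = 0 := by
      intro lam hlam
      by_contra hne
      exact hlam (hspec s hs 1 (Or.inr rfl) hne)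
    obtain ⟨h1, hAP1, hmean1, htail1⟩ := forward_core f hf s (-1) (Or.inl rfl)
      (Sig (s:ℂ) (-1)) hspec1 δseq hδpos g1seq hg1AP (fun n x hx => happ1 n x hx)
    obtain ⟨h2, hAP2, hmean2, htail2⟩ := forward_core f hf s 1 (Or.inr rfl)
      (Sig (s:ℂ) 1) hspec2 δseq hδpos g2seq hg2AP (fun n x hx => happ2 n x hx)
    obtain ⟨n₀, hn₀⟩ : ∃ n₀ : ℕ, 2/((n₀:ℝ)+1) < ε := by
      obtain ⟨n, hn⟩ := exists_nat_gt (2/ε)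
      refine ⟨n, ?_⟩
      rw [div_lt_iff₀ (by positivity)]
      rw [div_lt_iff₀ hε] at hn
      nlinarith
    set dL : ℝ := Real.log (δseq n₀) with hdL
    refine ⟨δseq n₀, hδIoo n₀, translateR h1 dL, translateR h2 dL,
      isAP_translateR hAP1 _, isAP_translateR hAP2 _, ?_, ?_, ?_, ?_⟩
    · intro lam hlam
      by_contra hnot
      have h0 : apMean (charB lam * h1) = 0 := hmean1 lam hnot
      have hb : bohrCoeffR (⇑(translateR h1 dL)) lam = 0 := by
        rw [bohr_eq_apMean _ (isAP_translateR hAP1 _), ← norm_eq_zero,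
          apMean_char_translate_norm lam hAP1, h0, norm_zero]
      exact hlam hb
    · intro lam hlam
      by_contra hnot
      have h0 : apMean (charB lam * h2) = 0 := hmean2 lam hnot
      have hb : bohrCoeffR (⇑(translateR h2 dL)) lam = 0 := by
        rw [bohr_eq_apMean _ (isAP_translateR hAP2 _), ← norm_eq_zero,
          apMean_char_translate_norm lam hAP2, h0, norm_zero]
      exact hlam hb
    · intro x hx
      have := tail_to_approx (⇑f) s (-1) (hδpos n₀) h1 (htail1 n₀) x hx
      exact lt_of_le_of_lt this hn₀
    · intro x hx
      have := tail_to_approx (⇑f) s 1 (hδpos n₀) h2 (htail2 n₀) x hx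
      exact lt_of_le_of_lt this hn₀
  · -- backward direction
    intro hrhs s hs k hk lam hlam
    by_contra hnot
    refine hlam ?_
    refine circBohr_eq_zero f s k lam hk hf ?_
    intro ε hε
    obtain ⟨δ, hδIoo, g₁, g₂, hAP1, hAP2, hsp1, hsp2, happ1, happ2⟩ := hrhs s hs ε hε
    rcases hk with hk | hk
    · subst hk
      refine ⟨δ, hδIoo.1, g₁, hAP1, ?_, fun x hx => happ1 x hx⟩
      by_contra hb
      exact hnot (hsp1 hb)
    · subst hk
      refine ⟨δ, hδIoo.1, g₂, hAP2, ?_, fun x hx => happ2 x hx⟩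
      by_contra hb
      exact hnot (hsp2 hb)
end
end

section
/- For every closed set S ⊆ ∂𝔻 and every f ∈ SAP(S), the total spectrum ⋃_{s ∈ S, k ∈ {−1,1}} spec_s^k(f) is at most countable. -/
set_option synthInstance.maxHeartbeats 1000000
set_option maxHeartbeats 1000000
set_option linter.unusedSectionVars false
set_option linter.unusedVariables false
set_option linter.unnecessarySimpa false
open scoped ComplexConjugate


open Complex Filter Topology Set Metric
open scoped ENNReal
open scoped BoundedContinuousFunction

noncomputable section

namespace SAP

variable {B : Type*} [NormedAddCommGroup B] [NormedSpace ℂ B]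

lemma translateR_apply (f : ℝ →ᵇ B) (τ x : ℝ) : translateR f τ x = f (x + τ) := rfl

lemma translateR_translateR (f : ℝ →ᵇ B) (τ σ : ℝ) :
    translateR (translateR f τ) σ = translateR f (σ + τ) := by
  ext x; simp [translateR_apply, add_assoc]

lemma IsAP.translate {f : ℝ →ᵇ B} (hf : IsAP f) (τ : ℝ) : IsAP (translateR f τ) := by
  have hsub : Set.range (translateR (translateR f τ)) ⊆ Set.range (translateR f) := by
    rintro - ⟨σ, rfl⟩
    exact ⟨σ + τ, (translateR_translateR f τ σ).symm⟩
  exact hf.of_isClosed_subset isClosed_closure (closure_mono hsub)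

lemma IsAP.almost_periods {h : ℝ →ᵇ ℂ} (hap : IsAP h) {ε : ℝ} (hε : 0 < ε) :
    ∃ L : ℝ, 0 < L ∧ ∀ a : ℝ, ∃ τ, τ ∈ Set.Icc a (a + L) ∧
      ∀ x : ℝ, ‖h (x + τ) - h x‖ ≤ ε := by
  have htb : TotallyBounded (Set.range (translateR h)) :=
    TotallyBounded.subset subset_closure hap.totallyBounded
  rw [totallyBounded_iff_subset] at htb
  obtain ⟨t, hts, htf, hcov⟩ := htb _ (Metric.dist_mem_uniformity hε)
  haveI := htf.to_subtype
  choose σ hσ using fun y : t => hts y.2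
  obtain ⟨R, hR⟩ := (Set.finite_range fun y : t => |σ y|).bddAbove
  set M := max R 0 with hM
  refine ⟨2 * M + 1, by positivity, fun a => ?_⟩
  set c := a + (2 * M + 1) / 2 with hc
  have hcmem : translateR h c ∈ ⋃ y ∈ t, {x | (x, y) ∈ {p : (ℝ →ᵇ ℂ) × (ℝ →ᵇ ℂ) | dist p.1 p.2 < ε}} :=
    hcov (Set.mem_range_self c)
  simp only [Set.mem_iUnion, Set.mem_setOf_eq] at hcmem
  obtain ⟨y, hyt, hdy⟩ := hcmem
  have hσy : |σ ⟨y, hyt⟩| ≤ M := le_trans (hR ⟨⟨y, hyt⟩, rfl⟩) (le_max_left _ _)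
  refine ⟨c - σ ⟨y, hyt⟩, ⟨?_, ?_⟩, fun x => ?_⟩
  · have := (abs_le.mp hσy).2
    rw [hc]; linarith
  · have := (abs_le.mp hσy).1
    rw [hc]; linarith
  · have hdy' : dist (translateR h c) (translateR h (σ ⟨y, hyt⟩)) < ε := by
      rwa [hσ ⟨y, hyt⟩]
    have := BoundedContinuousFunction.dist_coe_le_dist (f := translateR h c)
      (g := translateR h (σ ⟨y, hyt⟩)) (x - σ ⟨y, hyt⟩)
    rw [translateR_apply, translateR_apply] at this
    have h1 : x - σ ⟨y, hyt⟩ + c = x + (c - σ ⟨y, hyt⟩) := by ring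
    have h2 : x - σ ⟨y, hyt⟩ + σ ⟨y, hyt⟩ = x := by ring
    rw [h1, h2, dist_eq_norm] at this
    exact le_trans this (le_of_lt hdy')

/-- the character `x ↦ e^{iλx}` as a bounded continuous function -/
def charB (lam : ℝ) : ℝ →ᵇ ℂ :=
  BoundedContinuousFunction.mkOfBound
    ⟨fun x => Complex.exp ((lam * x : ℝ) * Complex.I), by continuity⟩ 2
    (by
      intro x y
      have h1 : ‖(Complex.exp ((lam * x : ℝ) * Complex.I))‖ = 1 :=
        Complex.norm_exp_ofReal_mul_I _
      have h2 : ‖(Complex.exp ((lam * y : ℝ) * Complex.I))‖ = 1 :=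
        Complex.norm_exp_ofReal_mul_I _
      calc dist (Complex.exp ((lam * x : ℝ) * Complex.I)) (Complex.exp ((lam * y : ℝ) * Complex.I))
          ≤ ‖(Complex.exp ((lam * x : ℝ) * Complex.I))‖ +
            ‖(Complex.exp ((lam * y : ℝ) * Complex.I))‖ := by
            rw [dist_eq_norm]
            exact (norm_sub_le _ _)
        _ = 2 := by rw [h1, h2]; norm_num)

lemma charB_apply (lam x : ℝ) : charB lam x = Complex.exp ((lam * x : ℝ) * Complex.I) := rfl

lemma norm_charB_apply (lam x : ℝ) : ‖charB lam x‖ = 1 := by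
  rw [charB_apply, Complex.norm_exp_ofReal_mul_I]

lemma IsAP.char_mul {h : ℝ →ᵇ ℂ} (hap : IsAP h) (lam : ℝ) : IsAP (charB lam * h) := by
  set m : ℂ × (ℝ →ᵇ ℂ) → (ℝ →ᵇ ℂ) := fun p => p.1 • (charB lam * p.2) with hm
  have hmc : Continuous m := continuous_fst.smul (continuous_const.mul continuous_snd)
  have hC : IsCompact (m '' ((Metric.sphere (0:ℂ) 1) ×ˢ
      closure (Set.range (translateR h)))) :=
    ((isCompact_sphere 0 1).prod hap).image hmc
  have hsub : Set.range (translateR (charB lam * h)) ⊆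
      m '' ((Metric.sphere (0:ℂ) 1) ×ˢ closure (Set.range (translateR h))) := by
    rintro - ⟨τ, rfl⟩
    refine ⟨(Complex.exp ((lam * τ : ℝ) * Complex.I), translateR h τ), ⟨?_, subset_closure (Set.mem_range_self τ)⟩, ?_⟩
    · rw [mem_sphere_zero_iff_norm, Complex.norm_exp_ofReal_mul_I]
    · ext x
      simp only [hm, translateR_apply, BoundedContinuousFunction.coe_mul, Pi.mul_apply,
        BoundedContinuousFunction.coe_smul, Pi.smul_apply, smul_eq_mul, charB_apply]
      rw [← mul_assoc, ← Complex.exp_add]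
      congr 2
      push_cast
      ring
  exact hC.of_isClosed_subset isClosed_closure (closure_minimal hsub hC.isClosed)




/-- average of `h` over `[a, a+T]` -/
def avgI (h : ℝ → ℂ) (a T : ℝ) : ℂ := T⁻¹ • ∫ t in a..(a + T), h t

lemma norm_intervalIntegral_le (h : ℝ →ᵇ ℂ) (u v : ℝ) :
    ‖∫ t in u..v, h t‖ ≤ ‖h‖ * |v - u| :=
  intervalIntegral.norm_integral_le_of_norm_le_const fun x _ => h.norm_coe_le_norm x

lemma hint (h : ℝ →ᵇ ℂ) (u v : ℝ) :
    IntervalIntegrable (fun t => h t) MeasureTheory.volume u v :=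
  h.continuous.intervalIntegrable u v


/-- Step (i): averages over shifted windows are close to centered window averages. -/
lemma avg_shift_bound {h : ℝ →ᵇ ℂ} (hap : IsAP h) {ε : ℝ} (hε : 0 < ε) :
    ∃ L : ℝ, 0 < L ∧ ∀ a T : ℝ, 0 < T →
      ‖avgI (⇑h) a T - avgI (⇑h) 0 T‖ ≤ ε + 2 * L * ‖h‖ / T := by
  obtain ⟨L, hL, hAP⟩ := hap.almost_periods hε
  refine ⟨L, hL, fun a T hT => ?_⟩
  obtain ⟨τ, ⟨hτ1, hτ2⟩, hτ⟩ := hAP a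
  have I1 : ∫ t in (0:ℝ)..T, h (t + τ) = ∫ t in τ..(τ + T), h t := by
    have := intervalIntegral.integral_comp_add_right (a := (0:ℝ)) (b := T) (fun t => (h t : ℂ)) τ
    simpa [add_comm] using this
  have split1 : (∫ t in a..(a + T), h t) - ∫ t in τ..(τ + T), h t
      = (∫ t in a..τ, h t) - ∫ t in (a + T)..(τ + T), h t := by
    have e1 := intervalIntegral.integral_add_adjacent_intervals (hint h a τ) (hint h τ (a + T))
    have e2 := intervalIntegral.integral_add_adjacent_intervals (hint h τ (a + T)) (hint h (a + T) (τ + T))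
    rw [← e1, ← e2]; ring
  have hintτ : IntervalIntegrable (fun t => (h (t + τ) : ℂ)) MeasureTheory.volume 0 T :=
    (h.continuous.comp (continuous_id.add continuous_const)).intervalIntegrable 0 T
  have diff : (∫ t in a..(a + T), h t) - ∫ t in (0:ℝ)..T, h t
      = ((∫ t in a..τ, h t) - ∫ t in (a + T)..(τ + T), h t)
        + ∫ t in (0:ℝ)..T, ((h (t + τ) : ℂ) - h t) := by
    rw [intervalIntegral.integral_sub hintτ (hint h 0 T), I1, ← split1]; ring
  have bnd1 : ‖∫ t in a..τ, h t‖ ≤ ‖h‖ * L := by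
    refine le_trans (norm_intervalIntegral_le h a τ) ?_
    have : |τ - a| ≤ L := abs_le.mpr ⟨by linarith, by linarith⟩
    exact mul_le_mul_of_nonneg_left this (norm_nonneg h)
  have bnd2 : ‖∫ t in (a + T)..(τ + T), h t‖ ≤ ‖h‖ * L := by
    refine le_trans (norm_intervalIntegral_le h (a + T) (τ + T)) ?_
    have he : τ + T - (a + T) = τ - a := by ring
    rw [he]
    have : |τ - a| ≤ L := abs_le.mpr ⟨by linarith, by linarith⟩
    exact mul_le_mul_of_nonneg_left this (norm_nonneg h)
  have bnd3 : ‖∫ t in (0:ℝ)..T, ((h (t + τ) : ℂ) - h t)‖ ≤ ε * T := by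
    have := intervalIntegral.norm_integral_le_of_norm_le_const
      (C := ε) (f := fun t => (h (t + τ) : ℂ) - h t) (a := 0) (b := T)
      (fun x _ => hτ x)
    simpa [abs_of_pos hT] using this
  have hDbnd : ‖(∫ t in a..(a + T), h t) - ∫ t in (0:ℝ)..T, h t‖ ≤ 2 * L * ‖h‖ + ε * T := by
    rw [diff]
    calc ‖_‖ ≤ ‖(∫ t in a..τ, h t) - ∫ t in (a + T)..(τ + T), h t‖
        + ‖∫ t in (0:ℝ)..T, ((h (t + τ) : ℂ) - h t)‖ := norm_add_le _ _
      _ ≤ (‖h‖ * L + ‖h‖ * L) + ε * T := by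
          gcongr
          exact le_trans (norm_sub_le _ _) (by linarith)
      _ = 2 * L * ‖h‖ + ε * T := by ring
  have key : avgI (⇑h) a T - avgI (⇑h) 0 T
      = T⁻¹ • ((∫ t in a..(a + T), h t) - ∫ t in (0:ℝ)..T, h t) := by
    unfold avgI
    rw [zero_add, smul_sub]
  rw [key, norm_smul]
  have h1 : ‖(T⁻¹ : ℝ)‖ = T⁻¹ := by
    rw [Real.norm_eq_abs, abs_of_pos (inv_pos.mpr hT)]
  rw [h1]
  calc T⁻¹ * ‖(∫ t in a..(a + T), h t) - ∫ t in (0:ℝ)..T, h t‖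
      ≤ T⁻¹ * (2 * L * ‖h‖ + ε * T) := by
        exact mul_le_mul_of_nonneg_left hDbnd (inv_nonneg.mpr hT.le)
    _ = ε + 2 * L * ‖h‖ / T := by field_simp; ring



/-- Step (ii): block averaging. -/
lemma avg_block {h : ℝ →ᵇ ℂ} {η : ℝ} (T : ℝ) (hT : 0 < T)
    (hshift : ∀ a : ℝ, ‖avgI (⇑h) a T - avgI (⇑h) 0 T‖ ≤ η)
    (n : ℕ) (hn : 0 < n) :
    ‖avgI (⇑h) 0 (n * T) - avgI (⇑h) 0 T‖ ≤ η := by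
  have hsum : ∫ t in (0:ℝ)..(n * T), h t
      = ∑ k ∈ Finset.range n, ∫ t in ((k : ℝ) * T)..((k : ℝ) * T + T), h t := by
    have hadj := intervalIntegral.sum_integral_adjacent_intervals
      (a := fun k : ℕ => (k : ℝ) * T) (n := n) (fun k _ => hint h _ _)
    have ha : ∀ k : ℕ, ((k + 1 : ℕ) : ℝ) * T = (k : ℝ) * T + T := by
      intro k; push_cast; ring
    simp only [ha, Nat.cast_zero, zero_mul] at hadj
    exact hadj.symm
  have havg : avgI (⇑h) 0 (n * T) = (n : ℝ)⁻¹ • ∑ k ∈ Finset.range n, avgI (⇑h) ((k : ℝ) * T) T := by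
    unfold avgI
    rw [zero_add, hsum, Finset.smul_sum, Finset.smul_sum]
    congr 1
    ext k
    rw [smul_smul, mul_inv]
  have hdiff : avgI (⇑h) 0 (n * T) - avgI (⇑h) 0 T
      = (n : ℝ)⁻¹ • ∑ k ∈ Finset.range n, (avgI (⇑h) ((k : ℝ) * T) T - avgI (⇑h) 0 T) := by
    rw [havg, Finset.sum_sub_distrib, smul_sub, Finset.sum_const, Finset.card_range,
      ← Nat.cast_smul_eq_nsmul ℝ, smul_smul, inv_mul_cancel₀ (by exact_mod_cast hn.ne')]
    simp
  rw [hdiff, norm_smul]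
  have h1 : ‖((n : ℝ)⁻¹ : ℝ)‖ = (n : ℝ)⁻¹ := by
    rw [Real.norm_eq_abs, _root_.abs_of_nonneg (by positivity)]
  rw [h1]
  calc (n : ℝ)⁻¹ * ‖∑ k ∈ Finset.range n, (avgI (⇑h) ((k : ℝ) * T) T - avgI (⇑h) 0 T)‖
      ≤ (n : ℝ)⁻¹ * ∑ k ∈ Finset.range n, ‖avgI (⇑h) ((k : ℝ) * T) T - avgI (⇑h) 0 T‖ := by
        gcongr
        exact norm_sum_le _ _
    _ ≤ (n : ℝ)⁻¹ * ∑ k ∈ Finset.range n, η :=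
        mul_le_mul_of_nonneg_left (Finset.sum_le_sum fun k _ => hshift _) (by positivity)
    _ = (n : ℝ)⁻¹ * (n * η) := by rw [Finset.sum_const, Finset.card_range]; simp [nsmul_eq_mul]
    _ ≤ η := by
        rw [← mul_assoc, inv_mul_cancel₀ (by exact_mod_cast hn.ne'), one_mul]

/-- Step (iii): comparing an average with the floor-block average. -/
lemma avg_floor (h : ℝ →ᵇ ℂ) (T N : ℝ) (hT : 0 < T) (hTN : T ≤ N) :
    ‖avgI (⇑h) 0 N - avgI (⇑h) 0 ((⌊N / T⌋₊ : ℝ) * T)‖ ≤ 2 * T * ‖h‖ / N := by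
  set n := ⌊N / T⌋₊ with hn
  have hN : 0 < N := lt_of_lt_of_le hT hTN
  have hn1 : 1 ≤ n := Nat.le_floor (by rw [Nat.cast_one]; exact (one_le_div hT).mpr hTN)
  have hnn : (0:ℝ) < (n:ℝ) := by exact_mod_cast hn1
  have hnT_le : (n:ℝ) * T ≤ N := by
    have := Nat.floor_le (a := N / T) (by positivity)
    calc (n:ℝ) * T ≤ (N / T) * T := by gcongr
      _ = N := by field_simp
  have hN_lt : N < (n:ℝ) * T + T := by
    have := Nat.lt_floor_add_one (N / T)
    have := (div_lt_iff₀ hT).mp this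
    linarith [this]
  have hnT : 0 < (n:ℝ) * T := by positivity
  have hdecomp : avgI (⇑h) 0 N - avgI (⇑h) 0 ((n:ℝ) * T)
      = N⁻¹ • ((∫ t in (0:ℝ)..N, h t) - ∫ t in (0:ℝ)..((n:ℝ)*T), h t)
        + (N⁻¹ - ((n:ℝ)*T)⁻¹) • ∫ t in (0:ℝ)..((n:ℝ)*T), h t := by
    unfold avgI
    rw [zero_add, zero_add]
    module
  have htail : (∫ t in (0:ℝ)..N, h t) - ∫ t in (0:ℝ)..((n:ℝ)*T), h t
      = ∫ t in ((n:ℝ)*T)..N, h t := by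
    have := intervalIntegral.integral_add_adjacent_intervals (hint h 0 ((n:ℝ)*T)) (hint h ((n:ℝ)*T) N)
    rw [← this]; ring
  have hb1 : ‖N⁻¹ • ((∫ t in (0:ℝ)..N, h t) - ∫ t in (0:ℝ)..((n:ℝ)*T), h t)‖ ≤ T * ‖h‖ / N := by
    rw [htail, norm_smul, Real.norm_eq_abs, abs_of_pos (inv_pos.mpr hN)]
    calc N⁻¹ * ‖∫ t in ((n:ℝ)*T)..N, h t‖ ≤ N⁻¹ * (‖h‖ * |N - (n:ℝ)*T|) :=
          mul_le_mul_of_nonneg_left (norm_intervalIntegral_le h _ _) (by positivity)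
      _ ≤ N⁻¹ * (‖h‖ * T) := by
          refine mul_le_mul_of_nonneg_left (mul_le_mul_of_nonneg_left ?_ (norm_nonneg h)) (by positivity)
          rw [_root_.abs_of_nonneg (by linarith)]
          linarith
      _ = T * ‖h‖ / N := by field_simp
  have hb2 : ‖(N⁻¹ - ((n:ℝ)*T)⁻¹) • ∫ t in (0:ℝ)..((n:ℝ)*T), h t‖ ≤ T * ‖h‖ / N := by
    rw [norm_smul, Real.norm_eq_abs]
    have habs : |N⁻¹ - ((n:ℝ)*T)⁻¹| = (N - (n:ℝ)*T) / (N * ((n:ℝ)*T)) := by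
      rw [abs_sub_comm, _root_.abs_of_nonneg]
      · rw [inv_sub_inv hnT.ne' hN.ne', mul_comm ((n:ℝ)*T) N]
      · rw [sub_nonneg]
        exact inv_anti₀ hnT hnT_le
    rw [habs]
    calc (N - (n:ℝ)*T) / (N * ((n:ℝ)*T)) * ‖∫ t in (0:ℝ)..((n:ℝ)*T), h t‖
        ≤ (N - (n:ℝ)*T) / (N * ((n:ℝ)*T)) * (‖h‖ * ((n:ℝ)*T)) := by
          refine mul_le_mul_of_nonneg_left ?_ (div_nonneg (by linarith) (by positivity))
          have := norm_intervalIntegral_le h 0 ((n:ℝ)*T)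
          simpa [_root_.abs_of_pos hnT] using this
      _ ≤ (T / (N * ((n:ℝ)*T))) * (‖h‖ * ((n:ℝ)*T)) := by
          refine mul_le_mul_of_nonneg_right ?_ (by positivity)
          exact (div_le_div_iff_of_pos_right (by positivity)).mpr (by linarith)
      _ = T * ‖h‖ / N := by field_simp
  calc ‖avgI (⇑h) 0 N - avgI (⇑h) 0 ((n:ℝ) * T)‖ ≤ _ + _ := by rw [hdecomp]; exact norm_add_le _ _
    _ ≤ T * ‖h‖ / N + T * ‖h‖ / N := add_le_add hb1 hb2
    _ = 2 * T * ‖h‖ / N := by ring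



/-- Cauchy criterion for long averages of an almost periodic function. -/
lemma avg_cauchy {h : ℝ →ᵇ ℂ} (hap : IsAP h) {ε : ℝ} (hε : 0 < ε) :
    ∃ T₀ : ℝ, 0 < T₀ ∧ ∀ N M : ℝ, T₀ ≤ N → T₀ ≤ M →
      ‖avgI (⇑h) 0 N - avgI (⇑h) 0 M‖ ≤ ε := by
  have hε6 : 0 < ε / 6 := by linarith
  obtain ⟨L, hL, hshift⟩ := avg_shift_bound hap hε6
  set T : ℝ := max 1 (2 * L * ‖h‖ / (ε / 6)) with hTdef
  have hT : 0 < T := lt_of_lt_of_le one_pos (le_max_left _ _)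
  have hTbig : 2 * L * ‖h‖ / T ≤ ε / 6 := by
    have h2 : 0 ≤ 2 * L * ‖h‖ := by positivity
    rcases eq_or_lt_of_le h2 with hz | hpos
    · rw [← hz]; simp; positivity
    · rw [div_le_iff₀ hT]
      have h1 : 2 * L * ‖h‖ / (ε / 6) ≤ T := le_max_right _ _
      calc 2 * L * ‖h‖ = ε / 6 * (2 * L * ‖h‖ / (ε / 6)) := by field_simp
        _ ≤ ε / 6 * T := by exact mul_le_mul_of_nonneg_left h1 hε6.le
  set T₀ : ℝ := max T (2 * T * ‖h‖ / (ε / 6)) with hT₀def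
  have hT₀pos : 0 < T₀ := lt_of_lt_of_le hT (le_max_left _ _)
  have hTT₀ : T ≤ T₀ := le_max_left _ _
  have hhalf : ∀ N : ℝ, T₀ ≤ N → ‖avgI (⇑h) 0 N - avgI (⇑h) 0 T‖ ≤ ε / 2 := by
    intro N hN
    have hTN : T ≤ N := le_trans hTT₀ hN
    have hNpos : 0 < N := lt_of_lt_of_le hT₀pos hN
    set n := ⌊N / T⌋₊ with hn
    have hn1 : 0 < n := Nat.le_floor (by rw [Nat.cast_one]; exact (one_le_div hT).mpr hTN)
    have hb1 : ‖avgI (⇑h) 0 N - avgI (⇑h) 0 ((n : ℝ) * T)‖ ≤ 2 * T * ‖h‖ / N :=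
      avg_floor h T N hT hTN
    have hb2 : ‖avgI (⇑h) 0 ((n : ℝ) * T) - avgI (⇑h) 0 T‖ ≤ ε / 6 + 2 * L * ‖h‖ / T :=
      avg_block T hT (fun a => hshift a T hT) n hn1
    have hb3 : 2 * T * ‖h‖ / N ≤ ε / 6 := by
      have h2 : 0 ≤ 2 * T * ‖h‖ := by positivity
      rcases eq_or_lt_of_le h2 with hz | hpos
      · rw [← hz]; simp; positivity
      · rw [div_le_iff₀ hNpos]
        have h1 : 2 * T * ‖h‖ / (ε / 6) ≤ T₀ := le_max_right _ _
        calc 2 * T * ‖h‖ = ε / 6 * (2 * T * ‖h‖ / (ε / 6)) := by field_simp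
          _ ≤ ε / 6 * N := mul_le_mul_of_nonneg_left (le_trans h1 hN) hε6.le
    calc ‖avgI (⇑h) 0 N - avgI (⇑h) 0 T‖
        ≤ ‖avgI (⇑h) 0 N - avgI (⇑h) 0 ((n : ℝ) * T)‖
          + ‖avgI (⇑h) 0 ((n : ℝ) * T) - avgI (⇑h) 0 T‖ := by
          have : avgI (⇑h) 0 N - avgI (⇑h) 0 T
              = (avgI (⇑h) 0 N - avgI (⇑h) 0 ((n : ℝ) * T))
                + (avgI (⇑h) 0 ((n : ℝ) * T) - avgI (⇑h) 0 T) := by ring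
          rw [this]; exact norm_add_le _ _
      _ ≤ ε / 6 + (ε / 6 + 2 * L * ‖h‖ / T) := add_le_add (le_trans hb1 hb3) hb2
      _ ≤ ε / 6 + (ε / 6 + ε / 6) := by linarith
      _ = ε / 2 := by ring
  refine ⟨T₀, hT₀pos, fun N M hN hM => ?_⟩
  calc ‖avgI (⇑h) 0 N - avgI (⇑h) 0 M‖
      ≤ ‖avgI (⇑h) 0 N - avgI (⇑h) 0 T‖ + ‖avgI (⇑h) 0 M - avgI (⇑h) 0 T‖ := by
        have : avgI (⇑h) 0 N - avgI (⇑h) 0 M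
            = (avgI (⇑h) 0 N - avgI (⇑h) 0 T) - (avgI (⇑h) 0 M - avgI (⇑h) 0 T) := by ring
        rw [this]; exact norm_sub_le _ _
    _ ≤ ε / 2 + ε / 2 := add_le_add (hhalf N hN) (hhalf M hM)
    _ = ε := by ring

/-- The centered averages of an almost periodic function converge. -/
lemma tendsto_avg_center {h : ℝ →ᵇ ℂ} (hap : IsAP h) :
    ∃ m : ℂ, Tendsto (fun T : ℝ => avgI (⇑h) 0 T) atTop (𝓝 m) := by
  have hcs : CauchySeq (fun n : ℕ => avgI (⇑h) 0 ((n : ℝ) + 1)) := by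
    rw [Metric.cauchySeq_iff]
    intro ε hε
    obtain ⟨T₀, hT₀, hC⟩ := avg_cauchy hap (half_pos hε)
    refine ⟨⌈T₀⌉₊, fun m hm n hn => ?_⟩
    have h1 : T₀ ≤ (m : ℝ) + 1 := le_trans (Nat.le_ceil T₀) (by exact_mod_cast le_trans hm (Nat.le_succ m))
    have h2 : T₀ ≤ (n : ℝ) + 1 := le_trans (Nat.le_ceil T₀) (by exact_mod_cast le_trans hn (Nat.le_succ n))
    rw [dist_eq_norm]
    exact lt_of_le_of_lt (hC _ _ h1 h2) (half_lt_self hε)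
  obtain ⟨m, hm⟩ := cauchySeq_tendsto_of_complete hcs
  refine ⟨m, Metric.tendsto_atTop.mpr fun ε hε => ?_⟩
  obtain ⟨T₀, hT₀, hC⟩ := avg_cauchy hap (by positivity : (0:ℝ) < ε / 2)
  rw [Metric.tendsto_atTop] at hm
  obtain ⟨n₀, hn₀⟩ := hm (ε / 2) (by positivity)
  set n := max n₀ ⌈T₀⌉₊ with hthemax
  have hd1 : dist (avgI (⇑h) 0 ((n : ℝ) + 1)) m < ε / 2 := hn₀ n (le_max_left _ _)
  have hTn : T₀ ≤ (n : ℝ) + 1 :=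
    le_trans (Nat.le_ceil T₀) (by exact_mod_cast le_trans (le_max_right n₀ ⌈T₀⌉₊) (Nat.le_succ n))
  refine ⟨T₀, fun N hN => ?_⟩
  calc dist (avgI (⇑h) 0 N) m ≤ dist (avgI (⇑h) 0 N) (avgI (⇑h) 0 ((n : ℝ) + 1))
        + dist (avgI (⇑h) 0 ((n : ℝ) + 1)) m := dist_triangle _ _ _
    _ < ε / 2 + ε / 2 := by
        refine add_lt_add_of_le_of_lt ?_ hd1
        rw [dist_eq_norm]
        exact hC _ _ hN hTn
    _ = ε := by ring



/-- Averages of an almost periodic function over `[-2T, -T]` converge. -/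
lemma IsAP.tendsto_bohr_avg {h : ℝ →ᵇ ℂ} (hap : IsAP h) :
    ∃ m : ℂ, Tendsto (fun T : ℝ => T⁻¹ • ∫ t in (-2*T)..(-T), (h t : ℂ)) atTop (𝓝 m) := by
  obtain ⟨m, hm⟩ := tendsto_avg_center hap
  refine ⟨m, ?_⟩
  have key : Tendsto (fun T : ℝ => avgI (⇑h) (-2*T) T) atTop (𝓝 m) := by
    rw [Metric.tendsto_atTop]
    intro ε hε
    have hε3 : 0 < ε / 3 := by linarith
    obtain ⟨L, hL, hshift⟩ := avg_shift_bound hap hε3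
    rw [Metric.tendsto_atTop] at hm
    obtain ⟨T₁, hT₁⟩ := hm (ε / 3) hε3
    refine ⟨max (max T₁ 1) (2 * L * ‖h‖ / (ε / 3)), fun T hT => ?_⟩
    have hT1 : (1:ℝ) ≤ T := le_trans (le_trans (le_max_right T₁ 1) (le_max_left _ _)) hT
    have hTpos : 0 < T := lt_of_lt_of_le one_pos hT1
    have hTT₁ : T₁ ≤ T := le_trans (le_trans (le_max_left T₁ 1) (le_max_left _ _)) hT
    have hdivb : 2 * L * ‖h‖ / T ≤ ε / 3 := by
      have h2 : 0 ≤ 2 * L * ‖h‖ := by positivity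
      rcases eq_or_lt_of_le h2 with hz | hpos
      · rw [← hz]; simp; positivity
      · rw [div_le_iff₀ hTpos]
        have h1 : 2 * L * ‖h‖ / (ε / 3) ≤ T := le_trans (le_max_right _ _) hT
        calc 2 * L * ‖h‖ = ε / 3 * (2 * L * ‖h‖ / (ε / 3)) := by field_simp
          _ ≤ ε / 3 * T := mul_le_mul_of_nonneg_left h1 hε3.le
    calc dist (avgI (⇑h) (-2*T) T) m
        ≤ dist (avgI (⇑h) (-2*T) T) (avgI (⇑h) 0 T) + dist (avgI (⇑h) 0 T) m := dist_triangle _ _ _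
      _ < (ε / 3 + 2 * L * ‖h‖ / T) + ε / 3 := by
          refine add_lt_add_of_le_of_lt ?_ (hT₁ T hTT₁)
          rw [dist_eq_norm]
          exact hshift _ _ hTpos
      _ ≤ (ε / 3 + ε / 3) + ε / 3 := by linarith
      _ = ε := by ring
  have hfun : (fun T : ℝ => T⁻¹ • ∫ t in (-2*T)..(-T), (h t : ℂ))
      = fun T : ℝ => avgI (⇑h) (-2*T) T := by
    funext T
    unfold avgI
    rw [show -2*T + T = -T by ring]
  rw [hfun]
  exact key



/-- average of a pure character over `[-2T,-T]` tends to `0` for nonzero frequency -/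
lemma charAvg_tendsto_zero {θ : ℝ} (hθ : θ ≠ 0) :
    Tendsto (fun T : ℝ => T⁻¹ • ∫ t in (-2*T)..(-T), Complex.exp (Complex.I * θ * t))
      atTop (𝓝 0) := by
  have hθ' : (0:ℝ) < |θ| := abs_pos.mpr hθ
  have hc : (Complex.I * θ) ≠ 0 := mul_ne_zero Complex.I_ne_zero (by exact_mod_cast hθ)
  have hb : ∀ᶠ T : ℝ in atTop,
      ‖T⁻¹ • ∫ t in (-2*T)..(-T), Complex.exp (Complex.I * θ * t)‖ ≤ T⁻¹ * (2 / |θ|) := by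
    filter_upwards [eventually_ge_atTop (1:ℝ)] with T hT
    have hTpos : 0 < T := lt_of_lt_of_le one_pos hT
    have hI : ∫ t in (-2*T)..(-T), Complex.exp (Complex.I * θ * t)
        = (Complex.exp (Complex.I * θ * ((-T:ℝ):ℂ)) - Complex.exp (Complex.I * θ * ((-2*T:ℝ):ℂ)))
          / (Complex.I * θ) := by
      have := integral_exp_mul_complex (a := -2*T) (b := -T) hc
      simpa [mul_assoc] using this
    rw [norm_smul, hI, norm_div]
    have habs : ∀ x : ℝ, ‖Complex.exp (Complex.I * θ * (x:ℂ))‖ = 1 := by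
      intro x
      rw [show Complex.I * θ * (x:ℂ) = ((θ * x : ℝ) : ℂ) * Complex.I by push_cast; ring]
      exact Complex.norm_exp_ofReal_mul_I _
    have hnum : ‖Complex.exp (Complex.I * θ * ((-T:ℝ):ℂ)) - Complex.exp (Complex.I * θ * ((-2*T:ℝ):ℂ))‖ ≤ 2 := by
      refine le_trans (norm_sub_le _ _) ?_
      rw [habs, habs]; norm_num
    have hden : ‖Complex.I * (θ:ℂ)‖ = |θ| := by
      rw [norm_mul, Complex.norm_I, one_mul, Complex.norm_real, Real.norm_eq_abs]
    rw [hden, Real.norm_eq_abs, _root_.abs_of_pos (inv_pos.mpr hTpos)]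
    gcongr
  have hlim : Tendsto (fun T : ℝ => T⁻¹ * (2 / |θ|)) atTop (𝓝 0) := by
    have := tendsto_inv_atTop_zero.mul_const (2 / |θ|)
    simpa using this
  exact squeeze_zero_norm' hb hlim

/-- average of the constant character (`θ = 0`) tends to `1`. -/
lemma charAvg_tendsto_one :
    Tendsto (fun T : ℝ => T⁻¹ • ∫ t in (-2*T)..(-T), (1:ℂ)) atTop (𝓝 1) := by
  have : ∀ᶠ T : ℝ in atTop, (T⁻¹ • ∫ t in (-2*T)..(-T), (1:ℂ)) = 1 := by
    filter_upwards [eventually_ge_atTop (1:ℝ)] with T hT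
    have hTpos : (0:ℝ) < T := lt_of_lt_of_le one_pos hT
    rw [intervalIntegral.integral_const]
    rw [smul_smul]
    rw [show -T - (-2*T) = T by ring]
    rw [inv_mul_cancel₀ hTpos.ne', one_smul]
  exact Tendsto.congr' (by filter_upwards [this] with T h using h.symm) tendsto_const_nhds

/-- combined: average of `exp(I θ t)` tends to 1 if θ = 0 else 0 -/
lemma charAvg_tendsto (θ : ℝ) :
    Tendsto (fun T : ℝ => T⁻¹ • ∫ t in (-2*T)..(-T), Complex.exp (Complex.I * θ * t))
      atTop (𝓝 (if θ = 0 then 1 else 0)) := by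
  by_cases hθ : θ = 0
  · simp only [hθ, if_true]
    have : ∀ T : ℝ, (∫ t in (-2*T)..(-T), Complex.exp (Complex.I * (0:ℝ) * t))
        = ∫ t in (-2*T)..(-T), (1:ℂ) := by
      intro T
      congr 1
      funext t
      simp
    simpa [this] using charAvg_tendsto_one
  · simp only [hθ, if_false]
    exact charAvg_tendsto_zero hθ



lemma intervalIntegral_conj {f : ℝ → ℂ} {a b : ℝ} :
    ∫ x in a..b, conj (f x) = conj (∫ x in a..b, f x) := by
  simp only [intervalIntegral, ← integral_conj, map_sub]

/-- Bessel-type inequality for limits of averages over `[-2T,-T]`. -/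
lemma bessel (h : ℝ →ᵇ ℂ) (ca : ℝ → ℂ) (s : Finset ℝ)
    (haca : ∀ lam ∈ s, Tendsto (fun T : ℝ =>
        T⁻¹ • ∫ t in (-2*T)..(-T), Complex.exp (-(Complex.I * lam * t)) * (h t : ℂ))
      atTop (𝓝 (ca lam))) :
    ∑ lam ∈ s, ‖ca lam‖^2 ≤ ‖h‖^2 := by
  classical
  set p : ℝ → ℂ := fun t => ∑ lam ∈ s, ca lam * Complex.exp (Complex.I * lam * t) with hp
  have hce : ∀ c : ℂ, Continuous fun t : ℝ => Complex.exp (c * t) := fun c =>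
    Complex.continuous_exp.comp (continuous_const.mul Complex.continuous_ofReal)
  have hcem : ∀ lam : ℝ, Continuous fun t : ℝ => Complex.exp (-(Complex.I * lam * t)) := by
    intro lam
    have e : (fun t : ℝ => Complex.exp (-(Complex.I * lam * t)))
        = fun t : ℝ => Complex.exp ((-(Complex.I * lam)) * t) := by
      funext t
      rw [show -(Complex.I * lam * t) = (-(Complex.I * lam)) * t by ring]
    rw [e]; exact hce _
  have hcec : ∀ lam : ℝ, Continuous fun t : ℝ => Complex.exp (Complex.I * lam * t) :=
    fun lam => hce (Complex.I * lam)
  have hpc : Continuous p := continuous_finset_sum _ fun lam _ => continuous_const.mul (hcec lam)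
  have hhc : Continuous fun t : ℝ => (h t : ℂ) := h.continuous
  have hconjc : Continuous (conj : ℂ → ℂ) := Complex.continuous_conj
  -- the four integrand products
  have c_hh : Continuous fun t : ℝ => (h t : ℂ) * conj (h t) := hhc.mul (hconjc.comp hhc)
  have c_hp : Continuous fun t : ℝ => (h t : ℂ) * conj (p t) := hhc.mul (hconjc.comp hpc)
  have c_ph : Continuous fun t : ℝ => p t * conj (h t) := hpc.mul (hconjc.comp hhc)
  have c_pp : Continuous fun t : ℝ => p t * conj (p t) := hpc.mul (hconjc.comp hpc)
  set HT : ℝ → ℂ := fun T => T⁻¹ • ∫ t in (-2*T)..(-T), (h t : ℂ) * conj (h t) with hHT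
  set XT : ℝ → ℂ := fun T => T⁻¹ • ∫ t in (-2*T)..(-T), (h t : ℂ) * conj (p t) with hXT
  set YT : ℝ → ℂ := fun T => T⁻¹ • ∫ t in (-2*T)..(-T), p t * conj (h t) with hYT
  set ZT : ℝ → ℂ := fun T => T⁻¹ • ∫ t in (-2*T)..(-T), p t * conj (p t) with hZT
  set GT : ℝ → ℂ := fun T => T⁻¹ • ∫ t in (-2*T)..(-T), (h t - p t) * conj (h t - p t) with hGT
  -- X is a combination of the basic averages
  have hXsum : ∀ T : ℝ, XT T = ∑ lam ∈ s, conj (ca lam) *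
      (T⁻¹ • ∫ t in (-2*T)..(-T), Complex.exp (-(Complex.I * lam * t)) * (h t : ℂ)) := by
    intro T
    have hpt : ∀ t : ℝ, (h t : ℂ) * conj (p t)
        = ∑ lam ∈ s, conj (ca lam) * (Complex.exp (-(Complex.I * lam * t)) * (h t : ℂ)) := by
      intro t
      rw [hp]
      simp only [map_sum, map_mul, Finset.mul_sum]
      refine Finset.sum_congr rfl fun lam _ => ?_
      rw [← Complex.exp_conj]
      have hcj : conj (Complex.I * lam * t) = -(Complex.I * lam * t) := by
        simp [map_mul, Complex.conj_I, Complex.conj_ofReal]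
        try ring
      rw [hcj]
      ring
    rw [hXT]
    simp only [hpt]
    rw [intervalIntegral.integral_finset_sum
      (f := fun lam t => conj (ca lam) * (Complex.exp (-(Complex.I * lam * t)) * (h t : ℂ))) (fun lam _ =>
      ((continuous_const.mul ((hcem lam).mul hhc)).intervalIntegrable _ _))]
    rw [Finset.smul_sum]
    refine Finset.sum_congr rfl fun lam _ => ?_
    rw [intervalIntegral.integral_const_mul, mul_smul_comm]
  have hX : Tendsto XT atTop (𝓝 (∑ lam ∈ s, conj (ca lam) * ca lam)) := by
    refine Tendsto.congr (fun T => (hXsum T).symm) (tendsto_finset_sum s fun lam hlam => ?_)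
    exact (haca lam hlam).const_mul (conj (ca lam))
  -- Y is the conjugate of X
  have hYconj : ∀ T : ℝ, YT T = conj (XT T) := by
    intro T
    rw [hYT, hXT]
    have hpt : ∀ t : ℝ, p t * conj (h t) = conj ((h t : ℂ) * conj (p t)) := by
      intro t
      rw [map_mul, Complex.conj_conj]
      ring
    simp only [hpt]
    rw [intervalIntegral_conj]
    rw [Complex.real_smul, Complex.real_smul, map_mul, Complex.conj_ofReal]
  have hY : Tendsto YT atTop (𝓝 (conj (∑ lam ∈ s, conj (ca lam) * ca lam))) := by
    refine Tendsto.congr (fun T => (hYconj T).symm) ?_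
    exact (Complex.continuous_conj.tendsto _).comp hX
  -- Z expansion
  have hZsum : ∀ T : ℝ, ZT T = ∑ lam ∈ s, ∑ mu ∈ s, (ca lam * conj (ca mu)) *
      (T⁻¹ • ∫ t in (-2*T)..(-T), Complex.exp (Complex.I * ((lam - mu : ℝ) : ℂ) * t)) := by
    intro T
    have hpt : ∀ t : ℝ, p t * conj (p t)
        = ∑ lam ∈ s, ∑ mu ∈ s, (ca lam * conj (ca mu))
          * Complex.exp (Complex.I * ((lam - mu : ℝ) : ℂ) * t) := by
      intro t
      rw [hp, map_sum, Finset.sum_mul_sum]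
      refine Finset.sum_congr rfl fun lam _ => Finset.sum_congr rfl fun mu _ => ?_
      rw [map_mul]
      rw [← Complex.exp_conj]
      have h1 : conj (Complex.I * mu * t) = -(Complex.I * mu * t) := by
        simp [map_mul, Complex.conj_I, Complex.conj_ofReal]
        try ring
      rw [h1]
      have h2 : Complex.exp (Complex.I * lam * t) * Complex.exp (-(Complex.I * mu * t))
          = Complex.exp (Complex.I * ((lam - mu : ℝ) : ℂ) * t) := by
        rw [← Complex.exp_add]
        congr 1
        push_cast
        ring
      calc ca lam * Complex.exp (Complex.I * lam * t)
            * (conj (ca mu) * Complex.exp (-(Complex.I * mu * t)))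
          = (ca lam * conj (ca mu)) * (Complex.exp (Complex.I * lam * t)
            * Complex.exp (-(Complex.I * mu * t))) := by ring
        _ = (ca lam * conj (ca mu)) * Complex.exp (Complex.I * ((lam - mu : ℝ) : ℂ) * t) := by
            rw [h2]
    rw [hZT]
    simp only [hpt]
    rw [intervalIntegral.integral_finset_sum
      (f := fun lam t => ∑ mu ∈ s, (ca lam * conj (ca mu)) * Complex.exp (Complex.I * ((lam - mu : ℝ) : ℂ) * t))
      (fun lam (_ : lam ∈ s) =>
      ((continuous_finset_sum s fun mu _ =>
        continuous_const.mul (hcec (lam - mu))).intervalIntegrable _ _))]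
    rw [Finset.smul_sum]
    refine Finset.sum_congr rfl fun lam _ => ?_
    rw [intervalIntegral.integral_finset_sum
      (f := fun mu t => (ca lam * conj (ca mu)) * Complex.exp (Complex.I * ((lam - mu : ℝ) : ℂ) * t))
      (fun mu _ =>
      (continuous_const.mul (hcec (lam - mu))).intervalIntegrable _ _)]
    rw [Finset.smul_sum]
    refine Finset.sum_congr rfl fun mu _ => ?_
    rw [intervalIntegral.integral_const_mul, mul_smul_comm]
  have hZ : Tendsto ZT atTop (𝓝 (∑ lam ∈ s, ca lam * conj (ca lam))) := by
    have hZ0 : Tendsto ZT atTop (𝓝 (∑ lam ∈ s, ∑ mu ∈ s,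
        (ca lam * conj (ca mu)) * (if lam - mu = 0 then 1 else 0))) := by
      refine Tendsto.congr (fun T => (hZsum T).symm) ?_
      refine tendsto_finset_sum s fun lam _ => tendsto_finset_sum s fun mu _ => ?_
      exact (charAvg_tendsto (lam - mu)).const_mul (ca lam * conj (ca mu))
    have hval : (∑ lam ∈ s, ∑ mu ∈ s, (ca lam * conj (ca mu)) * (if lam - mu = 0 then 1 else 0))
        = ∑ lam ∈ s, ca lam * conj (ca lam) := by
      refine Finset.sum_congr rfl fun lam hlam => ?_
      have : ∀ mu : ℝ, (ca lam * conj (ca mu)) * (if lam - mu = 0 then 1 else 0)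
          = if lam = mu then ca lam * conj (ca mu) else 0 := by
        intro mu
        by_cases hm : lam = mu
        · simp [hm]
        · have : ¬ (lam - mu = 0) := sub_ne_zero.mpr hm
          simp [hm, this]
      simp only [this]
      rw [Finset.sum_ite_eq s lam (fun mu => ca lam * conj (ca mu))]
      simp [hlam]
    rwa [hval] at hZ0
  -- G expansion
  have hGsplit : ∀ T : ℝ, GT T = HT T - XT T - YT T + ZT T := by
    intro T
    have hpt : ∀ t : ℝ, ((h t : ℂ) - p t) * conj ((h t : ℂ) - p t)
        = (h t : ℂ) * conj (h t) - (h t : ℂ) * conj (p t) - p t * conj (h t) + p t * conj (p t) := by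
      intro t
      rw [map_sub]
      ring
    rw [hGT]
    simp only [hpt]
    rw [intervalIntegral.integral_add
      (f := fun t => (h t : ℂ) * conj (h t) - (h t : ℂ) * conj (p t) - p t * conj (h t))
      (g := fun t => p t * conj (p t)) (((c_hh.sub c_hp).sub c_ph).intervalIntegrable _ _)
      (c_pp.intervalIntegrable _ _)]
    rw [intervalIntegral.integral_sub
      (f := fun t => (h t : ℂ) * conj (h t) - (h t : ℂ) * conj (p t))
      (g := fun t => p t * conj (h t)) ((c_hh.sub c_hp).intervalIntegrable _ _)
      (c_ph.intervalIntegrable _ _)]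
    rw [intervalIntegral.integral_sub (c_hh.intervalIntegrable _ _) (c_hp.intervalIntegrable _ _)]
    rw [hHT, hXT, hYT, hZT]
    rw [smul_add, smul_sub, smul_sub]
  -- real part bounds
  have hGpos : ∀ T : ℝ, 1 ≤ T → 0 ≤ (GT T).re := by
    intro T hT
    have hTpos : (0:ℝ) < T := lt_of_lt_of_le one_pos hT
    have hptG : ∀ t : ℝ, ((h t : ℂ) - p t) * conj ((h t : ℂ) - p t)
        = ((Complex.normSq ((h t : ℂ) - p t) : ℝ) : ℂ) := fun t => Complex.mul_conj _
    have : GT T = ((T⁻¹ * ∫ t in (-2*T)..(-T), Complex.normSq ((h t : ℂ) - p t) : ℝ) : ℂ) := by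
      rw [hGT]
      simp only [hptG]
      rw [intervalIntegral.integral_ofReal, Complex.real_smul, Complex.ofReal_mul]
    rw [this, Complex.ofReal_re]
    have hab : (-2*T : ℝ) ≤ -T := by linarith
    have hint : 0 ≤ ∫ t in (-2*T)..(-T), Complex.normSq ((h t : ℂ) - p t) :=
      intervalIntegral.integral_nonneg hab fun u _ => Complex.normSq_nonneg _
    positivity
  have hHbd : ∀ T : ℝ, 1 ≤ T → (HT T).re ≤ ‖h‖^2 := by
    intro T hT
    have hTpos : (0:ℝ) < T := lt_of_lt_of_le one_pos hT
    have h1 : (HT T).re ≤ ‖HT T‖ := by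
      exact Complex.re_le_norm _
    refine le_trans h1 ?_
    rw [hHT, norm_smul, Real.norm_eq_abs, _root_.abs_of_pos (inv_pos.mpr hTpos)]
    have h2 : ‖∫ t in (-2*T)..(-T), (h t : ℂ) * conj (h t)‖ ≤ ‖h‖^2 * |(-T) - (-2*T)| := by
      refine intervalIntegral.norm_integral_le_of_norm_le_const fun x _ => ?_
      rw [norm_mul, RCLike.norm_conj]
      calc ‖(h x : ℂ)‖ * ‖(h x : ℂ)‖ ≤ ‖h‖ * ‖h‖ :=
            mul_le_mul (h.norm_coe_le_norm x) (h.norm_coe_le_norm x) (norm_nonneg _) (norm_nonneg _)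
        _ = ‖h‖^2 := by ring
    have h3 : |(-T) - (-2*T)| = T := by rw [show (-T) - (-2*T) = T by ring, _root_.abs_of_pos hTpos]
    rw [h3] at h2
    calc T⁻¹ * ‖∫ t in (-2*T)..(-T), (h t : ℂ) * conj (h t)‖ ≤ T⁻¹ * (‖h‖^2 * T) :=
          mul_le_mul_of_nonneg_left h2 (by positivity)
      _ = ‖h‖^2 := by field_simp
  -- pass to the limit
  set W : ℝ → ℂ := fun T => XT T + YT T - ZT T with hW
  have hWlim : Tendsto W atTop (𝓝 ((∑ lam ∈ s, conj (ca lam) * ca lam)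
      + conj (∑ lam ∈ s, conj (ca lam) * ca lam) - ∑ lam ∈ s, ca lam * conj (ca lam))) :=
    (hX.add hY).sub hZ
  have hre : Tendsto (fun T => (W T).re) atTop (𝓝 (∑ lam ∈ s, ‖ca lam‖^2)) := by
    have hval : ((∑ lam ∈ s, conj (ca lam) * ca lam)
        + conj (∑ lam ∈ s, conj (ca lam) * ca lam) - ∑ lam ∈ s, ca lam * conj (ca lam)).re
        = ∑ lam ∈ s, ‖ca lam‖^2 := by
      have e1 : (∑ lam ∈ s, conj (ca lam) * ca lam) = ((∑ lam ∈ s, ‖ca lam‖^2 : ℝ) : ℂ) := by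
        rw [Complex.ofReal_sum]
        refine Finset.sum_congr rfl fun lam _ => ?_
        rw [mul_comm, Complex.mul_conj, Complex.normSq_eq_norm_sq]
        try norm_cast
      have e2 : (∑ lam ∈ s, ca lam * conj (ca lam)) = ((∑ lam ∈ s, ‖ca lam‖^2 : ℝ) : ℂ) := by
        rw [Complex.ofReal_sum]
        refine Finset.sum_congr rfl fun lam _ => ?_
        rw [Complex.mul_conj, Complex.normSq_eq_norm_sq]
        try norm_cast
      rw [e1, e2, Complex.conj_ofReal]
      rw [show ((∑ lam ∈ s, ‖ca lam‖^2 : ℝ) : ℂ) + ((∑ lam ∈ s, ‖ca lam‖^2 : ℝ) : ℂ)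
          - ((∑ lam ∈ s, ‖ca lam‖^2 : ℝ) : ℂ) = ((∑ lam ∈ s, ‖ca lam‖^2 : ℝ) : ℂ) by ring]
      exact Complex.ofReal_re _
    rw [← hval]
    exact (Complex.continuous_re.tendsto _).comp hWlim
  have hev : ∀ᶠ T : ℝ in atTop, (W T).re ≤ ‖h‖^2 := by
    filter_upwards [eventually_ge_atTop (1:ℝ)] with T hT
    have hWT : W T = HT T - GT T := by
      rw [hW]
      simp only
      rw [hGsplit T]
      ring
    rw [hWT, Complex.sub_re]
    have := hGpos T hT
    have := hHbd T hT
    linarith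
  exact le_of_tendsto hre hev



/-- Every almost periodic function has Bohr coefficients along `[-2T,-T]`, and the set
of frequencies with nonzero coefficient is countable. -/
lemma IsAP.exists_bohr_limits {h : ℝ →ᵇ ℂ} (hap : IsAP h) :
    ∃ ca : ℝ → ℂ,
      (∀ lam : ℝ, Tendsto (fun T : ℝ => T⁻¹ • ∫ t in (-2*T)..(-T),
          Complex.exp (-(Complex.I * lam * t)) * (h t : ℂ)) atTop (𝓝 (ca lam))) ∧
      {lam : ℝ | ca lam ≠ 0}.Countable := by
  have hex : ∀ lam : ℝ, ∃ m : ℂ, Tendsto (fun T : ℝ => T⁻¹ • ∫ t in (-2*T)..(-T),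
      Complex.exp (-(Complex.I * lam * t)) * (h t : ℂ)) atTop (𝓝 m) := by
    intro lam
    obtain ⟨m, hm⟩ := (hap.char_mul (-lam)).tendsto_bohr_avg
    refine ⟨m, ?_⟩
    have heq : ∀ T : ℝ, (∫ t in (-2*T)..(-T), ((charB (-lam) * h) t : ℂ))
        = ∫ t in (-2*T)..(-T), Complex.exp (-(Complex.I * lam * t)) * (h t : ℂ) := by
      intro T
      congr 1
      funext t
      rw [BoundedContinuousFunction.coe_mul, Pi.mul_apply, charB_apply]
      congr 2
      push_cast
      ring
    refine Tendsto.congr (fun T => ?_) hm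
    rw [heq]
  choose ca hca using hex
  refine ⟨ca, hca, ?_⟩
  have hsub : {lam : ℝ | ca lam ≠ 0} ⊆ ⋃ n : ℕ, {lam : ℝ | 1 / ((n:ℝ)+1) < ‖ca lam‖} := by
    intro lam hlam
    have : (0:ℝ) < ‖ca lam‖ := norm_pos_iff.mpr hlam
    obtain ⟨n, hn⟩ := exists_nat_one_div_lt this
    exact Set.mem_iUnion.mpr ⟨n, hn⟩
  refine Set.Countable.mono hsub (Set.countable_iUnion fun n => Set.Finite.countable ?_)
  by_contra hinf
  rw [← Set.not_infinite, not_not] at hinf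
  set m : ℕ := ⌈‖h‖^2 * ((n:ℝ)+1)^2⌉₊ + 1 with hm
  obtain ⟨t, hts, hcard⟩ := hinf.exists_subset_card_eq m
  have hbes := bessel h ca t (fun lam _ => hca lam)
  have hlow : (t.card : ℝ) * (1 / ((n:ℝ)+1))^2 ≤ ∑ lam ∈ t, ‖ca lam‖^2 := by
    have := Finset.card_nsmul_le_sum t (fun lam => ‖ca lam‖^2) ((1 / ((n:ℝ)+1))^2)
      (fun lam hlam => by
        have hmem : 1 / ((n:ℝ)+1) < ‖ca lam‖ := hts hlam
        have h0 : (0:ℝ) ≤ 1 / ((n:ℝ)+1) := by positivity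
        exact pow_le_pow_left₀ h0 hmem.le 2)
    rwa [nsmul_eq_mul] at this
  have hmgt : ‖h‖^2 * ((n:ℝ)+1)^2 < (m:ℝ) := by
    have h1 : (‖h‖^2 * ((n:ℝ)+1)^2) ≤ (⌈‖h‖^2 * ((n:ℝ)+1)^2⌉₊ : ℝ) := Nat.le_ceil _
    have h2 : ((⌈‖h‖^2 * ((n:ℝ)+1)^2⌉₊ : ℕ) : ℝ) < (m:ℝ) := by
      rw [hm]; exact_mod_cast Nat.lt_succ_self _
    linarith
  have hn1 : ((n:ℝ)+1) ≠ 0 := by positivity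
  have hkey : ‖h‖^2 < (m:ℝ) * (1 / ((n:ℝ)+1))^2 := by
    have he : ‖h‖^2 = (‖h‖^2 * ((n:ℝ)+1)^2) * (1 / ((n:ℝ)+1))^2 := by
      field_simp
    rw [he]
    exact mul_lt_mul_of_pos_right hmgt (by positivity)
  rw [hcard] at hlow
  linarith



lemma norm_exp_neg_I_mul (lam x : ℝ) : ‖Complex.exp (-(Complex.I * lam * x))‖ = 1 := by
  rw [show -(Complex.I * lam * x) = ((-(lam * x) : ℝ) : ℂ) * Complex.I by push_cast; ring]
  exact Complex.norm_exp_ofReal_mul_I _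

/-- countability of the spectrum of a semi-almost periodic function over any point -/
lemma sapSpec_countable (f : circleSet → ℂ) (hf : IsSAP f) (s : circleSet) (k : ℝ)
    (hk : k = -1 ∨ k = 1) : (sapSpec f s k).Countable := by
  -- for each n, an almost periodic approximation of f on the k-side arc, in exp coordinates
  have hex : ∀ n : ℕ, ∃ δ : ℝ, δ ∈ Set.Ioo (0:ℝ) Real.pi ∧ ∃ g : ℝ →ᵇ ℂ, IsAP g ∧
      ∀ x : ℝ, x < 0 → ‖f (arcPt s k (δ * Real.exp x)) - g x‖ < 1/((n:ℝ)+1) := by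
    intro n
    obtain ⟨δ, hδ, g₁, g₂, hg₁, hg₂, ha₁, ha₂⟩ := hf s (1/((n:ℝ)+1)) (by positivity)
    rcases hk with hk | hk
    · exact ⟨δ, hδ, g₁, hg₁, by rw [hk]; exact ha₁⟩
    · exact ⟨δ, hδ, g₂, hg₂, by rw [hk]; exact ha₂⟩
  choose δ hδ g hg happ using hex
  set h : ℕ → (ℝ →ᵇ ℂ) := fun n => translateR (g n) (-(Real.log (δ n))) with hh
  have hhap : ∀ n, IsAP (h n) := fun n => (hg n).translate _
  have hcas := fun n => (hhap n).exists_bohr_limits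
  choose ca hca hcnt using hcas
  -- approximation along the ray, in the far past
  have hfar : ∀ n : ℕ, ∀ t : ℝ, t ≤ -(|Real.log (δ n)| + 1) →
      ‖f (arcPt s k (Real.exp t)) - h n t‖ ≤ 1/((n:ℝ)+1) := by
    intro n t ht
    have hlog : t < Real.log (δ n) := by
      have h1 : -|Real.log (δ n)| ≤ Real.log (δ n) := neg_abs_le _
      linarith
    have hx : t - Real.log (δ n) < 0 := by linarith
    have harg : δ n * Real.exp (t - Real.log (δ n)) = Real.exp t := by
      rw [Real.exp_sub, Real.exp_log (hδ n).1, mul_comm,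
        div_mul_cancel₀ _ (hδ n).1.ne']
    have := happ n (t - Real.log (δ n)) hx
    rw [harg] at this
    have hht : h n t = g n (t - Real.log (δ n)) := by
      rw [hh]
      simp only [translateR_apply]
      rw [sub_eq_add_neg]
    rw [hht]
    exact this.le
  -- the spectrum is contained in the union of the coefficient supports
  have hsub : sapSpec f s k ⊆ ⋃ n : ℕ, {lam : ℝ | ca n lam ≠ 0} := by
    intro lam hlam
    by_contra hnot
    simp only [Set.mem_iUnion, Set.mem_setOf_eq, not_exists, not_not] at hnot
    apply hlam
    show circBohr f s k lam = 0
    have htend : Tendsto (fun T : ℝ => T⁻¹ •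
        ∫ t in (-2 * T)..(-T), Complex.exp (-(Complex.I * lam * t)) • f (arcPt s k (Real.exp t)))
        atTop (𝓝 0) := by
      rw [NormedAddCommGroup.tendsto_nhds_zero]
      intro ε hε
      obtain ⟨n, hn⟩ := exists_nat_one_div_lt (by positivity : (0:ℝ) < ε/2)
      have hcan := hca n lam
      rw [hnot n] at hcan
      have hBsmall : ∀ᶠ T : ℝ in atTop,
          ‖T⁻¹ • ∫ t in (-2*T)..(-T), Complex.exp (-(Complex.I * lam * t)) * (h n t : ℂ)‖ < ε/2 := by
        have := hcan.norm
        rw [norm_zero] at this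
        exact this.eventually_lt_const (by positivity)
      filter_upwards [hBsmall, eventually_ge_atTop (max 1 (|Real.log (δ n)| + 1))] with T hB hT
      have hT1 : (1:ℝ) ≤ T := le_trans (le_max_left _ _) hT
      have hTpos : (0:ℝ) < T := lt_of_lt_of_le one_pos hT1
      have hTlog : |Real.log (δ n)| + 1 ≤ T := le_trans (le_max_right _ _) hT
      by_cases hii : IntervalIntegrable
          (fun t : ℝ => Complex.exp (-(Complex.I * lam * t)) • f (arcPt s k (Real.exp t)))
          MeasureTheory.volume (-2*T) (-T)
      · have hiiψ : IntervalIntegrable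
            (fun t : ℝ => Complex.exp (-(Complex.I * lam * t)) * (h n t : ℂ))
            MeasureTheory.volume (-2*T) (-T) := by
          refine Continuous.intervalIntegrable ?_ _ _
          refine Continuous.mul ?_ (h n).continuous
          have e : (fun t : ℝ => Complex.exp (-(Complex.I * lam * t)))
              = fun t : ℝ => Complex.exp ((-(Complex.I * lam)) * t) := by
            funext t
            rw [show -(Complex.I * lam * t) = (-(Complex.I * lam)) * t by ring]
          rw [e]
          exact Complex.continuous_exp.comp (continuous_const.mul Complex.continuous_ofReal)
        have hdiff : ‖∫ t in (-2*T)..(-T),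
            (Complex.exp (-(Complex.I * lam * t)) • f (arcPt s k (Real.exp t))
              - Complex.exp (-(Complex.I * lam * t)) * (h n t : ℂ))‖ ≤ (1/((n:ℝ)+1)) * T := by
          have hb : ∀ x ∈ Set.uIoc (-2*T) (-T),
              ‖Complex.exp (-(Complex.I * lam * x)) • f (arcPt s k (Real.exp x))
                - Complex.exp (-(Complex.I * lam * x)) * (h n x : ℂ)‖ ≤ 1/((n:ℝ)+1) := by
            intro x hx
            rw [Set.uIoc_of_le (by linarith : -2*T ≤ -T)] at hx
            have hxle : x ≤ -(|Real.log (δ n)| + 1) := by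
              have := hx.2
              linarith
            have e1 : Complex.exp (-(Complex.I * lam * x)) • f (arcPt s k (Real.exp x))
                - Complex.exp (-(Complex.I * lam * x)) * (h n x : ℂ)
                = Complex.exp (-(Complex.I * lam * x)) * (f (arcPt s k (Real.exp x)) - h n x) := by
              rw [smul_eq_mul]; ring
            rw [e1, norm_mul, norm_exp_neg_I_mul, one_mul]
            exact hfar n x hxle
          have := intervalIntegral.norm_integral_le_of_norm_le_const hb
          calc ‖_‖ ≤ (1/((n:ℝ)+1)) * |(-T) - (-2*T)| := this
            _ = (1/((n:ℝ)+1)) * T := by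
                rw [show (-T) - (-2*T) = T by ring, _root_.abs_of_pos hTpos]
        have hsplit : (∫ t in (-2*T)..(-T),
              Complex.exp (-(Complex.I * lam * t)) • f (arcPt s k (Real.exp t)))
            - ∫ t in (-2*T)..(-T), Complex.exp (-(Complex.I * lam * t)) * (h n t : ℂ)
            = ∫ t in (-2*T)..(-T),
              (Complex.exp (-(Complex.I * lam * t)) • f (arcPt s k (Real.exp t))
                - Complex.exp (-(Complex.I * lam * t)) * (h n t : ℂ)) :=
          (intervalIntegral.integral_sub hii hiiψ).symm
        calc ‖T⁻¹ • ∫ t in (-2*T)..(-T),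
              Complex.exp (-(Complex.I * lam * t)) • f (arcPt s k (Real.exp t))‖
            ≤ ‖T⁻¹ • ((∫ t in (-2*T)..(-T),
                Complex.exp (-(Complex.I * lam * t)) • f (arcPt s k (Real.exp t)))
              - ∫ t in (-2*T)..(-T), Complex.exp (-(Complex.I * lam * t)) * (h n t : ℂ))‖
              + ‖T⁻¹ • ∫ t in (-2*T)..(-T), Complex.exp (-(Complex.I * lam * t)) * (h n t : ℂ)‖ := by
              have : T⁻¹ • (∫ t in (-2*T)..(-T),
                  Complex.exp (-(Complex.I * lam * t)) • f (arcPt s k (Real.exp t)))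
                  = (T⁻¹ • ((∫ t in (-2*T)..(-T),
                      Complex.exp (-(Complex.I * lam * t)) • f (arcPt s k (Real.exp t)))
                    - ∫ t in (-2*T)..(-T), Complex.exp (-(Complex.I * lam * t)) * (h n t : ℂ)))
                    + T⁻¹ • ∫ t in (-2*T)..(-T), Complex.exp (-(Complex.I * lam * t)) * (h n t : ℂ) := by
                rw [← smul_add]
                congr 1
                ring
              rw [this]
              exact norm_add_le _ _
          _ < ε/2 + ε/2 := by
              refine add_lt_add_of_le_of_lt ?_ hB
              rw [hsplit, norm_smul, Real.norm_eq_abs, _root_.abs_of_pos (inv_pos.mpr hTpos)]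
              calc T⁻¹ * ‖∫ t in (-2*T)..(-T),
                  (Complex.exp (-(Complex.I * lam * t)) • f (arcPt s k (Real.exp t))
                    - Complex.exp (-(Complex.I * lam * t)) * (h n t : ℂ))‖
                  ≤ T⁻¹ * ((1/((n:ℝ)+1)) * T) := mul_le_mul_of_nonneg_left hdiff (by positivity)
                _ = 1/((n:ℝ)+1) := by field_simp
                _ ≤ ε/2 := hn.le
          _ = ε := by ring
      · rw [intervalIntegral.integral_undef hii, smul_zero, norm_zero]
        exact hε
    exact htend.limUnder_eq
  refine Set.Countable.mono hsub (Set.countable_iUnion fun n => hcnt n)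



lemma circle_ne_zero (s : circleSet) : (s : ℂ) ≠ 0 := by
  intro h
  have hs : ‖(s : ℂ)‖ = 1 := s.2
  rw [h] at hs
  simp at hs

lemma circle_div_abs (s z : circleSet) : ‖((z : ℂ) / (s : ℂ))‖ = 1 := by
  have hs : ‖(s : ℂ)‖ = 1 := s.2
  have hz : ‖(z : ℂ)‖ = 1 := z.2
  rw [norm_div, hs, hz]
  norm_num

lemma arcPt_arg (s z : circleSet) {k : ℝ} (hk : k = -1 ∨ k = 1) :
    arcPt s k (k * Complex.arg ((z : ℂ) / (s : ℂ))) = z := by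
  have hexp : Complex.exp (((Complex.arg ((z : ℂ) / (s : ℂ)) : ℝ) : ℂ) * Complex.I)
      = (z : ℂ) / (s : ℂ) := by
    have h := Complex.norm_mul_exp_arg_mul_I ((z : ℂ) / (s : ℂ))
    rwa [circle_div_abs, Complex.ofReal_one, one_mul] at h
  apply Subtype.ext
  show (s : ℂ) * Complex.exp (Complex.I * ((k : ℂ) *
      ((k * Complex.arg ((z : ℂ) / (s : ℂ)) : ℝ) : ℂ))) = (z : ℂ)
  have harg : Complex.I * ((k : ℂ) * ((k * Complex.arg ((z : ℂ) / (s : ℂ)) : ℝ) : ℂ))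
      = ((Complex.arg ((z : ℂ) / (s : ℂ)) : ℝ) : ℂ) * Complex.I := by
    rcases hk with rfl | rfl <;> push_cast <;> ring
  rw [harg, hexp, mul_comm, div_mul_cancel₀ _ (circle_ne_zero s)]

lemma arcPt_zero (s : circleSet) (k : ℝ) : arcPt s k 0 = s := by
  apply Subtype.ext
  show (s : ℂ) * Complex.exp (Complex.I * ((k : ℂ) * ((0:ℝ) : ℂ))) = (s : ℂ)
  simp

lemma arg_arcPt (s : circleSet) {k x : ℝ} (hx : k * x ∈ Set.Ioc (-Real.pi) Real.pi) :
    Complex.arg ((arcPt s k x : ℂ) / (s : ℂ)) = k * x := by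
  have hdiv : (arcPt s k x : ℂ) / (s : ℂ) = Complex.exp (((k * x : ℝ) : ℂ) * Complex.I) := by
    show ((s : ℂ) * Complex.exp (Complex.I * ((k : ℂ) * (x : ℂ)))) / (s : ℂ) = _
    rw [mul_comm ((s : ℂ)) _, mul_div_assoc, div_self (circle_ne_zero s), mul_one]
    congr 1
    push_cast
    ring
  rw [hdiv, Complex.arg_exp_mul_I]
  refine (toIocMod_eq_self _).mpr ?_
  rw [show -Real.pi + 2 * Real.pi = Real.pi by ring]
  exact hx

lemma isOpen_argSet (s : circleSet) (a b : ℝ) (ha : -Real.pi ≤ a) (hb : b ≤ Real.pi) :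
    IsOpen {z : circleSet | Complex.arg ((z : ℂ) / (s : ℂ)) ∈ Set.Ioo a b} := by
  set O : Set ℂ := {w : ℂ | w / (s : ℂ) ∈ Complex.slitPlane} with hO
  have hOopen : IsOpen O := Complex.isOpen_slitPlane.preimage (continuous_id.div_const _)
  have hcont : ContinuousOn (fun w : ℂ => Complex.arg (w / (s : ℂ))) O := by
    intro w hw
    have hdivc : ContinuousAt (fun w : ℂ => w / (s : ℂ)) w :=
      (continuous_id.div_const (s : ℂ)).continuousAt
    exact (ContinuousAt.comp (g := Complex.arg) (f := fun w : ℂ => w / (s : ℂ))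
      (Complex.continuousAt_arg hw) hdivc).continuousWithinAt
  have hW : IsOpen (O ∩ (fun w : ℂ => Complex.arg (w / (s : ℂ))) ⁻¹' (Set.Ioo a b)) :=
    hcont.isOpen_inter_preimage hOopen isOpen_Ioo
  have hset : {z : circleSet | Complex.arg ((z : ℂ) / (s : ℂ)) ∈ Set.Ioo a b}
      = Subtype.val ⁻¹' (O ∩ (fun w : ℂ => Complex.arg (w / (s : ℂ))) ⁻¹' (Set.Ioo a b)) := by
    ext z
    simp only [Set.mem_setOf_eq, Set.mem_preimage, Set.mem_inter_iff]
    constructor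
    · intro hz
      refine ⟨?_, hz⟩
      rw [hO, Set.mem_setOf_eq, Complex.mem_slitPlane_iff_arg]
      constructor
      · exact (lt_of_lt_of_le hz.2 hb).ne
      · exact div_ne_zero (circle_ne_zero z) (circle_ne_zero s)
    · exact fun hz => hz.2
  rw [hset]
  exact hW.preimage continuous_subtype_val

lemma compactSpace_circle : CompactSpace circleSet := by
  rw [← isCompact_iff_compactSpace]
  apply Metric.isCompact_of_isClosed_isBounded
  · have : circleSet = (fun z : ℂ => ‖z‖) ⁻¹' {1} := rfl
    rw [this]
    exact isClosed_singleton.preimage continuous_norm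
  · apply (Metric.isBounded_closedBall (x := (0:ℂ)) (r := 1)).subset
    intro z hz
    have : ‖z‖ = 1 := hz
    rw [Metric.mem_closedBall, dist_zero_right, this]

/-- inside a one-sided arc on which `f` is uniformly approximated by an almost periodic
function in exponential coordinates, the oscillation of `f` is locally at most `3ε` -/
lemma arc_no_bad (f : circleSet → ℂ) (s : circleSet) {δ ε : ℝ}
    (hδ : δ ∈ Set.Ioo (0:ℝ) Real.pi) (hε : 0 < ε) {k : ℝ} (hk : k = -1 ∨ k = 1)
    (g : ℝ →ᵇ ℂ)
    (happ : ∀ x : ℝ, x < 0 → ‖f (arcPt s k (δ * Real.exp x)) - g x‖ < ε)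
    (z₀ : circleSet) (hz₀ : k * Complex.arg ((z₀ : ℂ) / (s : ℂ)) ∈ Set.Ioo 0 δ) :
    ∃ V ∈ 𝓝 z₀, ∀ u ∈ V, ∀ w ∈ V, ‖f u - f w‖ ≤ 3 * ε := by
  set θ : circleSet → ℝ := fun z => k * Complex.arg ((z : ℂ) / (s : ℂ)) with hθ
  set A : Set circleSet := {z | θ z ∈ Set.Ioo 0 δ} with hA
  have hAopen : IsOpen A := by
    rcases hk with rfl | rfl
    · have : A = {z : circleSet | Complex.arg ((z : ℂ) / (s : ℂ)) ∈ Set.Ioo (-δ) 0} := by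
        ext z
        simp only [hA, hθ, Set.mem_setOf_eq, Set.mem_Ioo, neg_one_mul]
        constructor
        · rintro ⟨h1, h2⟩; constructor <;> linarith
        · rintro ⟨h1, h2⟩; constructor <;> linarith
      rw [this]
      exact isOpen_argSet s (-δ) 0 (by linarith [hδ.2]) (le_of_lt Real.pi_pos)
    · have : A = {z : circleSet | Complex.arg ((z : ℂ) / (s : ℂ)) ∈ Set.Ioo 0 δ} := by
        ext z
        simp only [hA, hθ, Set.mem_setOf_eq, one_mul]
      rw [this]
      exact isOpen_argSet s 0 δ (by linarith [Real.pi_pos]) (le_of_lt hδ.2)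
  set G : circleSet → ℂ := fun z => g (Real.log (θ z / δ)) with hG
  have hfG : ∀ z ∈ A, ‖f z - G z‖ ≤ ε := by
    intro z hzA
    have hθz : θ z ∈ Set.Ioo 0 δ := hzA
    have hratio : 0 < θ z / δ := div_pos hθz.1 hδ.1
    have hratio1 : θ z / δ < 1 := (div_lt_one hδ.1).mpr hθz.2
    have hxneg : Real.log (θ z / δ) < 0 := Real.log_neg hratio hratio1
    have harg : δ * Real.exp (Real.log (θ z / δ)) = θ z := by
      rw [Real.exp_log hratio, mul_comm, div_mul_cancel₀ _ hδ.1.ne']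
    have := happ (Real.log (θ z / δ)) hxneg
    rw [harg] at this
    have harc : arcPt s k (θ z) = z := arcPt_arg s z hk
    rw [harc] at this
    exact this.le
  have hslit : (z₀ : ℂ) / (s : ℂ) ∈ Complex.slitPlane := by
    rw [Complex.mem_slitPlane_iff_arg]
    refine ⟨?_, div_ne_zero (circle_ne_zero z₀) (circle_ne_zero s)⟩
    have habs : |Complex.arg ((z₀ : ℂ) / (s : ℂ))| < Real.pi := by
      have h1 : |θ z₀| < Real.pi := by
        rw [_root_.abs_of_pos hz₀.1]
        exact lt_trans hz₀.2 hδ.2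
      have h2 : |θ z₀| = |Complex.arg ((z₀ : ℂ) / (s : ℂ))| := by
        rw [hθ]
        simp only [abs_mul]
        rcases hk with rfl | rfl <;> simp
      rwa [h2] at h1
    exact (lt_of_abs_lt habs).ne
  have hGc : ContinuousAt G z₀ := by
    have hdivc : ContinuousAt (fun z : circleSet => (z : ℂ) / (s : ℂ)) z₀ :=
      (continuous_subtype_val.div_const (s : ℂ)).continuousAt
    have hargc : ContinuousAt (fun z : circleSet => Complex.arg ((z : ℂ) / (s : ℂ))) z₀ :=
      ContinuousAt.comp (g := Complex.arg) (f := fun z : circleSet => (z : ℂ) / (s : ℂ))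
        (Complex.continuousAt_arg hslit) hdivc
    have hθc : ContinuousAt θ z₀ := continuousAt_const.mul hargc
    have hratioc : ContinuousAt (fun z : circleSet => θ z / δ) z₀ := hθc.div_const δ
    have hlogc : ContinuousAt Real.log (θ z₀ / δ) :=
      Real.continuousAt_log (ne_of_gt (div_pos hz₀.1 hδ.1))
    have hlog2 : ContinuousAt (fun z : circleSet => Real.log (θ z / δ)) z₀ :=
      ContinuousAt.comp (g := Real.log) (f := fun z : circleSet => θ z / δ) hlogc hratioc
    exact ContinuousAt.comp (g := ⇑g) (f := fun z : circleSet => Real.log (θ z / δ))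
      (g.continuous.continuousAt) hlog2
  refine ⟨A ∩ G ⁻¹' Metric.ball (G z₀) (ε/2),
    Filter.inter_mem (hAopen.mem_nhds hz₀) (hGc.preimage_mem_nhds (Metric.ball_mem_nhds _ (by positivity))), ?_⟩
  intro u hu w hw
  have hub : dist (G u) (G z₀) < ε/2 := hu.2
  have hwb : dist (G w) (G z₀) < ε/2 := hw.2
  have h1 : ‖f u - G u‖ ≤ ε := hfG u hu.1
  have h2 : ‖f w - G w‖ ≤ ε := hfG w hw.1
  calc ‖f u - f w‖ = ‖(f u - G u) + ((G u - G z₀) + ((G z₀ - G w) + (G w - f w)))‖ := by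
        congr 1; ring
    _ ≤ ‖f u - G u‖ + (‖G u - G z₀‖ + (‖G z₀ - G w‖ + ‖G w - f w‖)) := by
        refine le_trans (norm_add_le _ _) ?_
        gcongr
        refine le_trans (norm_add_le _ _) ?_
        gcongr
        exact norm_add_le _ _
    _ ≤ ε + (ε/2 + (ε/2 + ε)) := by
        have e1 : ‖G u - G z₀‖ < ε/2 := by rwa [← dist_eq_norm]
        have e2 : ‖G z₀ - G w‖ < ε/2 := by rw [norm_sub_rev, ← dist_eq_norm]; exact hwb
        have e3 : ‖G w - f w‖ = ‖f w - G w‖ := norm_sub_rev _ _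
        rw [e3]
        exact add_le_add h1 (add_le_add e1.le (add_le_add e2.le h2))
    _ = 3 * ε := by ring


/-- a semi-almost periodic function is continuous off a countable set -/
lemma discont_countable (f : circleSet → ℂ) (hf : IsSAP f) :
    {z : circleSet | ¬ ContinuousAt f z}.Countable := by
  haveI : CompactSpace circleSet := compactSpace_circle
  set Bad : ℝ → Set circleSet :=
    fun c => {z | ∀ V ∈ 𝓝 z, ∃ u ∈ V, ∃ w ∈ V, c < ‖f u - f w‖} with hBad
  have hfin : ∀ c : ℝ, 0 < c → (Bad c).Finite := by
    intro c hc
    have hclaim : ∀ s : circleSet, ∃ N ∈ 𝓝 s, ∀ z ∈ N, z ≠ s → z ∉ Bad c := by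
      intro s
      obtain ⟨δ, hδ, g₁, g₂, hg₁, hg₂, ha₁, ha₂⟩ := hf s (c/3) (by positivity)
      set N : Set circleSet := {z | Complex.arg ((z : ℂ) / (s : ℂ)) ∈ Set.Ioo (-δ) δ} with hN
      have hNopen : IsOpen N :=
        isOpen_argSet s (-δ) δ (by linarith [hδ.2]) (le_of_lt hδ.2)
      have hsN : s ∈ N := by
        rw [hN]
        show Complex.arg ((s : ℂ) / (s : ℂ)) ∈ Set.Ioo (-δ) δ
        rw [div_self (circle_ne_zero s), Complex.arg_one]
        exact ⟨by linarith [hδ.1], hδ.1⟩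
      refine ⟨N, hNopen.mem_nhds hsN, fun z hz hzs => ?_⟩
      have hargne : Complex.arg ((z : ℂ) / (s : ℂ)) ≠ 0 := by
        intro h0
        apply hzs
        have h1 := arcPt_arg s z (Or.inr rfl)
        rw [h0, mul_zero, arcPt_zero] at h1
        exact h1.symm
      have hosc : ∃ V ∈ 𝓝 z, ∀ u ∈ V, ∀ w ∈ V, ‖f u - f w‖ ≤ 3 * (c/3) := by
        rcases lt_or_gt_of_ne hargne with hneg | hpos
        · refine arc_no_bad f s hδ (by positivity) (Or.inl rfl) g₁ ha₁ z ?_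
          constructor
          · simp only [neg_one_mul]
            linarith
          · have := hz.1
            simp only [neg_one_mul]
            linarith
        · refine arc_no_bad f s hδ (by positivity) (Or.inr rfl) g₂ ha₂ z ?_
          constructor
          · simpa using hpos
          · simpa using hz.2
      obtain ⟨V, hV, hVosc⟩ := hosc
      intro hbad
      obtain ⟨u, hu, w, hw, hlt⟩ := hbad V hV
      have := hVosc u hu w hw
      rw [show 3 * (c/3) = c by ring] at this
      exact absurd hlt (not_lt.mpr this)
    choose N hNnhds hNbad using hclaim
    obtain ⟨t, -, hcover⟩ := isCompact_univ.elim_nhds_subcover N (fun x _ => hNnhds x)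
    refine Set.Finite.subset t.finite_toSet fun z hz => ?_
    obtain ⟨x, hxt, hzx⟩ := Set.mem_iUnion₂.mp (hcover (Set.mem_univ z))
    by_cases hzx' : z = x
    · rw [hzx']; exact hxt
    · exact absurd hz (hNbad x z hzx hzx')
  have hsub : {z : circleSet | ¬ ContinuousAt f z} ⊆ ⋃ n : ℕ, Bad (1/((n:ℝ)+1)) := by
    intro z hz
    by_contra hnot
    simp only [Set.mem_iUnion, not_exists] at hnot
    apply hz
    rw [ContinuousAt, Metric.tendsto_nhds]
    intro ε hε
    obtain ⟨n, hn⟩ := exists_nat_one_div_lt hε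
    have hnb := hnot n
    simp only [hBad, Set.mem_setOf_eq] at hnb
    push_neg at hnb
    obtain ⟨V, hV, hVosc⟩ := hnb
    filter_upwards [hV] with u hu
    have := hVosc u hu z (mem_of_mem_nhds hV)
    rw [dist_eq_norm]
    exact lt_of_le_of_lt this hn
  exact Set.Countable.mono hsub
    (Set.countable_iUnion fun n => (hfin _ (by positivity)).countable)



lemma continuous_arcPt (s : circleSet) (k : ℝ) : Continuous fun t : ℝ => arcPt s k t := by
  apply Continuous.subtype_mk
  exact continuous_const.mul (Complex.continuous_exp.comp
    (continuous_const.mul (continuous_const.mul Complex.continuous_ofReal)))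

/-- at a point of continuity, the spectrum is contained in `{0}` -/
lemma sapSpec_of_continuousAt (f : circleSet → ℂ) (s : circleSet) (k : ℝ)
    (hcont : ContinuousAt f s) : sapSpec f s k ⊆ {0} := by
  intro lam hlam
  by_contra hlam0
  have hlamne : lam ≠ 0 := hlam0
  apply hlam
  show circBohr f s k lam = 0
  -- f along the arc converges to f s
  have harc : Tendsto (fun t : ℝ => arcPt s k (Real.exp t)) atBot (𝓝 s) := by
    have h1 : Tendsto (fun t : ℝ => Real.exp t) atBot (𝓝 0) := Real.tendsto_exp_atBot
    have h2 : ContinuousAt (fun x : ℝ => arcPt s k x) 0 := (continuous_arcPt s k).continuousAt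
    have := h2.tendsto.comp h1
    rwa [arcPt_zero] at this
  have hlim : Tendsto (fun t : ℝ => f (arcPt s k (Real.exp t))) atBot (𝓝 (f s)) :=
    hcont.tendsto.comp harc
  -- the constant-character average tends to zero
  have hch : Tendsto (fun T : ℝ => T⁻¹ • ∫ t in (-2*T)..(-T),
      Complex.exp (-(Complex.I * lam * t))) atTop (𝓝 0) := by
    have h0 : (-lam : ℝ) ≠ 0 := neg_ne_zero.mpr hlamne
    have hTz := charAvg_tendsto_zero h0
    have hint : ∀ T : ℝ, (∫ t in (-2*T)..(-T), Complex.exp (Complex.I * ((-lam : ℝ)) * t))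
        = ∫ t in (-2*T)..(-T), Complex.exp (-(Complex.I * lam * t)) := by
      intro T
      apply intervalIntegral.integral_congr
      intro t _
      show Complex.exp (Complex.I * ((-lam : ℝ)) * t) = Complex.exp (-(Complex.I * lam * t))
      congr 1
      push_cast
      ring
    refine Tendsto.congr (fun T => ?_) hTz
    rw [hint]
  have htend : Tendsto (fun T : ℝ => T⁻¹ •
      ∫ t in (-2 * T)..(-T), Complex.exp (-(Complex.I * lam * t)) • f (arcPt s k (Real.exp t)))
      atTop (𝓝 0) := by
    rw [NormedAddCommGroup.tendsto_nhds_zero]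
    intro ε hε
    have hch2 : Tendsto (fun T : ℝ => ‖(T⁻¹ • ∫ t in (-2*T)..(-T),
        Complex.exp (-(Complex.I * lam * t))) * f s‖) atTop (𝓝 0) := by
      have := (hch.norm).mul_const ‖f s‖
      simp only [norm_zero, zero_mul] at this
      refine Tendsto.congr (fun T => ?_) this
      rw [norm_mul]
    have hsmall₁ : ∀ᶠ T : ℝ in atTop, ‖(T⁻¹ • ∫ t in (-2*T)..(-T),
        Complex.exp (-(Complex.I * lam * t))) * f s‖ < ε/2 := by
      exact hch2.eventually_lt_const (by positivity)
    have hsmall₂ : ∀ᶠ t : ℝ in atBot, ‖f (arcPt s k (Real.exp t)) - f s‖ < ε/3 := by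
      have := Metric.tendsto_nhds.mp hlim (ε/3) (by positivity)
      filter_upwards [this] with t ht
      rwa [dist_eq_norm] at ht
    rw [Filter.eventually_atBot] at hsmall₂
    obtain ⟨t₀, ht₀⟩ := hsmall₂
    filter_upwards [hsmall₁, eventually_ge_atTop (max 1 (-t₀ + 1))] with T hs₁ hT
    have hT1 : (1:ℝ) ≤ T := le_trans (le_max_left _ _) hT
    have hTpos : (0:ℝ) < T := lt_of_lt_of_le one_pos hT1
    have hTt₀ : -T ≤ t₀ := by
      have := le_trans (le_max_right _ _) hT
      linarith
    by_cases hii : IntervalIntegrable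
        (fun t : ℝ => Complex.exp (-(Complex.I * lam * t)) • f (arcPt s k (Real.exp t)))
        MeasureTheory.volume (-2*T) (-T)
    · have hccont : Continuous fun t : ℝ => Complex.exp (-(Complex.I * lam * t)) * f s := by
        refine Continuous.mul ?_ continuous_const
        have e : (fun t : ℝ => Complex.exp (-(Complex.I * lam * t)))
            = fun t : ℝ => Complex.exp ((-(Complex.I * lam)) * t) := by
          funext t
          rw [show -(Complex.I * lam * t) = (-(Complex.I * lam)) * t by ring]
        rw [e]
        exact Complex.continuous_exp.comp (continuous_const.mul Complex.continuous_ofReal)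
      have hiiψ : IntervalIntegrable (fun t : ℝ => Complex.exp (-(Complex.I * lam * t)) * f s)
          MeasureTheory.volume (-2*T) (-T) := hccont.intervalIntegrable _ _
      have hdiffbd : ‖∫ t in (-2*T)..(-T),
          (Complex.exp (-(Complex.I * lam * t)) • f (arcPt s k (Real.exp t))
            - Complex.exp (-(Complex.I * lam * t)) * f s)‖ ≤ (ε/3) * T := by
        have hb : ∀ x ∈ Set.uIoc (-2*T) (-T),
            ‖Complex.exp (-(Complex.I * lam * x)) • f (arcPt s k (Real.exp x))
              - Complex.exp (-(Complex.I * lam * x)) * f s‖ ≤ ε/3 := by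
          intro x hx
          rw [Set.uIoc_of_le (by linarith : -2*T ≤ -T)] at hx
          have hxle : x ≤ t₀ := le_trans hx.2 hTt₀
          have e1 : Complex.exp (-(Complex.I * lam * x)) • f (arcPt s k (Real.exp x))
              - Complex.exp (-(Complex.I * lam * x)) * f s
              = Complex.exp (-(Complex.I * lam * x)) * (f (arcPt s k (Real.exp x)) - f s) := by
            rw [smul_eq_mul]; ring
          rw [e1, norm_mul, norm_exp_neg_I_mul, one_mul]
          exact (ht₀ x hxle).le
        have := intervalIntegral.norm_integral_le_of_norm_le_const hb
        calc ‖_‖ ≤ (ε/3) * |(-T) - (-2*T)| := this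
          _ = (ε/3) * T := by rw [show (-T) - (-2*T) = T by ring, _root_.abs_of_pos hTpos]
      have hsplit : (∫ t in (-2*T)..(-T),
            Complex.exp (-(Complex.I * lam * t)) • f (arcPt s k (Real.exp t)))
          = (∫ t in (-2*T)..(-T),
              (Complex.exp (-(Complex.I * lam * t)) • f (arcPt s k (Real.exp t))
                - Complex.exp (-(Complex.I * lam * t)) * f s))
            + ∫ t in (-2*T)..(-T), Complex.exp (-(Complex.I * lam * t)) * f s := by
        rw [← intervalIntegral.integral_add (hii.sub hiiψ) hiiψ]
        congr 1
        funext t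
        ring
      rw [hsplit, smul_add]
      refine lt_of_le_of_lt (norm_add_le _ _) ?_
      have hb1 : ‖T⁻¹ • ∫ t in (-2*T)..(-T),
          (Complex.exp (-(Complex.I * lam * t)) • f (arcPt s k (Real.exp t))
            - Complex.exp (-(Complex.I * lam * t)) * f s)‖ ≤ ε/3 := by
        rw [norm_smul, Real.norm_eq_abs, _root_.abs_of_pos (inv_pos.mpr hTpos)]
        calc T⁻¹ * ‖_‖ ≤ T⁻¹ * ((ε/3) * T) := mul_le_mul_of_nonneg_left hdiffbd (by positivity)
          _ = ε/3 := by field_simp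
      have hb2 : ‖T⁻¹ • ∫ t in (-2*T)..(-T), Complex.exp (-(Complex.I * lam * t)) * f s‖ < ε/2 := by
        have e2 : T⁻¹ • ∫ t in (-2*T)..(-T), Complex.exp (-(Complex.I * lam * t)) * f s
            = (T⁻¹ • ∫ t in (-2*T)..(-T), Complex.exp (-(Complex.I * lam * t))) * f s := by
          rw [intervalIntegral.integral_mul_const, smul_mul_assoc]
        rw [e2]
        exact hs₁
      calc ‖T⁻¹ • ∫ t in (-2*T)..(-T),
            (Complex.exp (-(Complex.I * lam * t)) • f (arcPt s k (Real.exp t))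
              - Complex.exp (-(Complex.I * lam * t)) * f s)‖
          + ‖T⁻¹ • ∫ t in (-2*T)..(-T), Complex.exp (-(Complex.I * lam * t)) * f s‖
          ≤ ε/3 + ‖T⁻¹ • ∫ t in (-2*T)..(-T), Complex.exp (-(Complex.I * lam * t)) * f s‖ := by
            gcongr
        _ < ε/3 + ε/2 := by linarith
        _ < ε := by linarith
    · rw [intervalIntegral.integral_undef hii, smul_zero, norm_zero]
      exact hε
  exact htend.limUnder_eq



end SAP

open SAP in
theorem stmt4 (S : Set ℂ) (hScirc : S ⊆ circleSet) (hScl : IsClosed S)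
    (f : LinfT) (hf : IsSAP ⇑f)
    (hfc : ContinuousOn (⇑f) {z : circleSet | (z : ℂ) ∉ S}) :
    (⋃ s : {z : circleSet // (z : ℂ) ∈ S}, ⋃ k ∈ ({-1, 1} : Set ℝ),
        sapSpec (⇑f) s.1 k).Countable := by
  classical
  have hD : {z : circleSet | ¬ ContinuousAt (⇑f) z}.Countable := discont_countable (⇑f) hf
  have hD'c : {s : {z : circleSet // (z : ℂ) ∈ S} | ¬ ContinuousAt (⇑f) s.1}.Countable := by
    have he : {s : {z : circleSet // (z : ℂ) ∈ S} | ¬ ContinuousAt (⇑f) s.1}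
        = Subtype.val ⁻¹' {z : circleSet | ¬ ContinuousAt (⇑f) z} := rfl
    rw [he]
    exact hD.preimage Subtype.val_injective
  have hsub : (⋃ s : {z : circleSet // (z : ℂ) ∈ S}, ⋃ k ∈ ({-1, 1} : Set ℝ),
      sapSpec (⇑f) s.1 k) ⊆ insert (0:ℝ)
      (⋃ s ∈ {s : {z : circleSet // (z : ℂ) ∈ S} | ¬ ContinuousAt (⇑f) s.1},
        ⋃ k ∈ ({-1, 1} : Set ℝ), sapSpec (⇑f) (s : {z : circleSet // (z : ℂ) ∈ S}).1 k) := by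
    intro lam hlam
    simp only [Set.mem_iUnion, exists_prop] at hlam
    obtain ⟨s, k, hk, hspec⟩ := hlam
    by_cases hcont : ContinuousAt (⇑f) s.1
    · left
      exact sapSpec_of_continuousAt (⇑f) s.1 k hcont hspec
    · right
      simp only [Set.mem_iUnion, Set.mem_setOf_eq, exists_prop]
      exact ⟨s, hcont, k, hk, hspec⟩
  refine Set.Countable.mono hsub ?_
  refine Set.Countable.insert 0 ?_
  refine Set.Countable.biUnion hD'c fun s hs => ?_
  refine Set.Countable.biUnion ((Set.countable_singleton (1:ℝ)).insert (-1)) fun k hk => ?_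
  refine sapSpec_countable (⇑f) hf s.1 k ?_
  simpa using hk
end
end
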